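/- arXiv:1811.04541 — 5 statements merged into one kernel-verified Lean document; each statement's English description precedes it below -/
import Mathlib

section
/- Almost surely, liminf_{N→∞} M_N / log N ≥ 1, where log denotes the logarithm with base 2. -/
open MeasureTheory ProbabilityTheory Filter
open scoped ENNReal Classical

/-- The block of `k + 1` consecutive tosses `X m, …, X (m + k)` (0-based indices) is
alternating, i.e. it contains `k` switches: every adjacent pair differs. -/
def AltBlock {Ω : Type*} (X : ℕ → Ω → Bool) (ω : Ω) (m k : ℕ) : Prop :=
  ∀ i, m ≤ i → i < m + k → X i ω ≠ X (i + 1) ω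

/-- `M_N^{(s+1)}` in the paper's (1-based) notation: the number of switches in the longest
run of consecutive switches in the window `X s, …, X (s + N - 1)` (0-based start `s`),
i.e. the largest `k` such that some block of `k + 1` consecutive tosses within the window
is alternating. -/
noncomputable def longestSwitchIn {Ω : Type*} (X : ℕ → Ω → Bool) (s N : ℕ) (ω : Ω) : ℕ :=
  sSup {k | ∃ m, s ≤ m ∧ m + k + 1 ≤ s + N ∧ AltBlock X ω m k}

/-- `M_N`: the number of switches in the longest run of consecutive switches among the
first `N` tosses `X 0, …, X (N - 1)` (0-based indexing of the paper's `X_1, …, X_N`). -/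
noncomputable def longestSwitch {Ω : Type*} (X : ℕ → Ω → Bool) (N : ℕ) (ω : Ω) : ℕ :=
  longestSwitchIn X 0 N ω

namespace OneLeLiminfAux

/-! ### Deterministic lemmas about `longestSwitch` -/

lemma altBlock_mono {Ω : Type*} {X : ℕ → Ω → Bool} {ω : Ω} {m k k' : ℕ}
    (h : AltBlock X ω m k) (hk : k' ≤ k) : AltBlock X ω m k' :=
  fun i h1 h2 => h i h1 (by omega)

lemma lsSet_eq {Ω : Type*} (X : ℕ → Ω → Bool) (N : ℕ) (ω : Ω) :
    longestSwitch X N ω = sSup {k | ∃ m, m + k + 1 ≤ N ∧ AltBlock X ω m k} := by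
  unfold longestSwitch longestSwitchIn
  congr 1; ext k; constructor
  · rintro ⟨m, -, h1, h2⟩; exact ⟨m, by omega, h2⟩
  · rintro ⟨m, h1, h2⟩; exact ⟨m, Nat.zero_le _, by omega, h2⟩

lemma bddAbove_lsSet {Ω : Type*} (X : ℕ → Ω → Bool) (N : ℕ) (ω : Ω) :
    BddAbove {k | ∃ m, m + k + 1 ≤ N ∧ AltBlock X ω m k} :=
  ⟨N, by rintro k ⟨m, h1, -⟩; omega⟩

lemma le_longestSwitch {Ω : Type*} {X : ℕ → Ω → Bool} {ω : Ω} {m k N : ℕ}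
    (h1 : m + k + 1 ≤ N) (h2 : AltBlock X ω m k) : k ≤ longestSwitch X N ω := by
  rw [lsSet_eq]; exact le_csSup (bddAbove_lsSet X N ω) ⟨m, h1, h2⟩

lemma exists_of_le_longestSwitch {Ω : Type*} {X : ℕ → Ω → Bool} {ω : Ω} {K N : ℕ}
    (hN : 1 ≤ N) (hK : K ≤ longestSwitch X N ω) :
    ∃ m, m + K + 1 ≤ N ∧ AltBlock X ω m K := by
  rw [lsSet_eq] at hK
  have hne : Set.Nonempty {k | ∃ m, m + k + 1 ≤ N ∧ AltBlock X ω m k} :=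
    ⟨0, show ∃ m, m + 0 + 1 ≤ N ∧ AltBlock X ω m 0 from
      ⟨0, by omega, fun i h1 h2 => absurd h2 (by omega)⟩⟩
  obtain ⟨m, h1, h2⟩ := Nat.sSup_mem hne (bddAbove_lsSet X N ω)
  exact ⟨m, by omega, altBlock_mono h2 hK⟩

lemma longestSwitch_mono {Ω : Type*} {X : ℕ → Ω → Bool} {ω : Ω} {N N' : ℕ}
    (hN : 1 ≤ N) (h : N ≤ N') : longestSwitch X N ω ≤ longestSwitch X N' ω := by
  rw [lsSet_eq, lsSet_eq]
  apply csSup_le_csSup (bddAbove_lsSet X N' ω)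
    ⟨0, show ∃ m, m + 0 + 1 ≤ N ∧ AltBlock X ω m 0 from
      ⟨0, by omega, fun i h1 h2 => absurd h2 (by omega)⟩⟩
  rintro k ⟨m, h1, h2⟩; exact ⟨m, by omega, h2⟩

/-! ### Alternating strings -/

/-- alternating predicate on infinite boolean strings -/
def AltF (b : ℕ → Bool) (a k : ℕ) : Prop := ∀ i, a ≤ i → i < a + k → b i ≠ b (i + 1)

/-- extension of a finite string by `false` -/
def extF {L : ℕ} (g : Fin L → Bool) : ℕ → Bool := fun i => if h : i < L then g ⟨i, h⟩ else false

lemma extF_lt {L : ℕ} (g : Fin L → Bool) {i : ℕ} (h : i < L) : extF g i = g ⟨i, h⟩ := dif_pos h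

lemma altF_congr {b b' : ℕ → Bool} {a k : ℕ} (h : ∀ i, a ≤ i → i ≤ a + k → b i = b' i) :
    AltF b a k ↔ AltF b' a k := by
  constructor <;> intro H i h1 h2
  · rw [← h i h1 (by omega), ← h (i+1) (by omega) (by omega)]; exact H i h1 h2
  · rw [h i h1 (by omega), h (i+1) (by omega) (by omega)]; exact H i h1 h2

lemma boolFact : ∀ x y z w : Bool, x ≠ y → z ≠ w → x = z → y = w := by decide

lemma card_altF_le (k : ℕ) :
    Fintype.card {g : Fin (k+1) → Bool // AltF (extF g) 0 k} ≤ 2 := by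
  have hcb : Fintype.card Bool = 2 := by simp
  rw [← hcb]
  apply Fintype.card_le_of_injective (fun g => g.1 ⟨0, Nat.succ_pos k⟩)
  rintro ⟨g, hg⟩ ⟨g', hg'⟩ h
  simp only at h
  apply Subtype.ext; funext i
  have key : ∀ j, j ≤ k → extF g j = extF g' j := by
    intro j
    induction j with
    | zero =>
      intro _
      rw [extF_lt g (Nat.succ_pos k), extF_lt g' (Nat.succ_pos k)]; exact h
    | succ n ih =>
      intro hn
      have e1 := hg n (Nat.zero_le _) (by omega)
      have e2 := hg' n (Nat.zero_le _) (by omega)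
      exact boolFact _ _ _ _ e1 e2 (ih (by omega))
  have := key i.val (by omega)
  rw [extF_lt g i.isLt, extF_lt g' i.isLt] at this
  simpa using this

lemma two_le_card_altF (k : ℕ) :
    2 ≤ Fintype.card {g : Fin (k+1) → Bool // AltF (extF g) 0 k} := by
  have h1 : AltF (extF (fun i : Fin (k+1) => decide (i.val % 2 = 0))) 0 k := by
    intro i hi1 hi2
    rw [extF_lt _ (by omega), extF_lt _ (by omega)]
    simp only [ne_eq, decide_eq_decide]
    omega
  have h2 : AltF (extF (fun i : Fin (k+1) => decide (i.val % 2 = 1))) 0 k := by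
    intro i hi1 hi2
    rw [extF_lt _ (by omega), extF_lt _ (by omega)]
    simp only [ne_eq, decide_eq_decide]
    omega
  refine Fintype.one_lt_card_iff.2 ⟨⟨_, h1⟩, ⟨_, h2⟩, ?_⟩
  intro hEq
  have := congrFun (congrArg Subtype.val hEq) ⟨0, Nat.succ_pos k⟩
  simp at this

/-! ### Blocks inside a long string -/

def blockIdx {n k : ℕ} (m : Fin n) (i : Fin (k+1)) : Fin (n*(k+1)) :=
  ⟨m.val*(k+1) + i.val, by
    have h1 : m.val + 1 ≤ n := m.isLt
    calc m.val*(k+1) + i.val < m.val*(k+1) + (k+1) := by omega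
    _ = (m.val+1)*(k+1) := by ring
    _ ≤ n*(k+1) := Nat.mul_le_mul_right _ h1⟩

def restrictBlock {n k : ℕ} (g : Fin (n*(k+1)) → Bool) (m : Fin n) : Fin (k+1) → Bool :=
  fun i => g (blockIdx m i)

lemma extF_restrict {n k : ℕ} (g : Fin (n*(k+1)) → Bool) (m : Fin n) (t : ℕ) (ht : t < k+1) :
    extF (restrictBlock g m) t = extF g (m.val*(k+1) + t) := by
  have hlt : m.val*(k+1) + t < n*(k+1) := (blockIdx m ⟨t, ht⟩).isLt
  rw [extF_lt _ ht, extF_lt _ hlt]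
  rfl

lemma altF_restrict_iff {n k : ℕ} (g : Fin (n*(k+1)) → Bool) (m : Fin n) :
    AltF (extF (restrictBlock g m)) 0 k ↔ AltF (extF g) (m.val*(k+1)) k := by
  constructor
  · intro H i h1 h2
    obtain ⟨t, rfl⟩ : ∃ t, i = m.val*(k+1) + t := ⟨i - m.val*(k+1), by omega⟩
    have := H t (Nat.zero_le _) (by omega)
    rw [extF_restrict g m t (by omega), extF_restrict g m (t+1) (by omega)] at this
    have e : m.val*(k+1) + (t+1) = (m.val*(k+1) + t) + 1 := by omega
    rw [e] at this
    exact this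
  · intro H t h1 h2
    rw [extF_restrict g m t (by omega), extF_restrict g m (t+1) (by omega)]
    have := H (m.val*(k+1)+t) (by omega) (by omega)
    have e : m.val*(k+1) + (t+1) = (m.val*(k+1) + t) + 1 := by omega
    rw [e]
    exact this

lemma restrict_inj {n k : ℕ} {g g' : Fin (n*(k+1)) → Bool}
    (h : ∀ m : Fin n, restrictBlock g m = restrictBlock g' m) : g = g' := by
  funext t
  have hk : 0 < k + 1 := Nat.succ_pos k
  have hm : t.val / (k+1) < n := by
    have := t.isLt
    rw [Nat.div_lt_iff_lt_mul hk]
    omega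
  have hi : t.val % (k+1) < k+1 := Nat.mod_lt _ hk
  have hval : (t.val/(k+1))*(k+1) + t.val % (k+1) = t.val := by
    rw [Nat.mul_comm]; exact Nat.div_add_mod t.val (k+1)
  have hfin : blockIdx (⟨t.val/(k+1), hm⟩ : Fin n) (⟨t.val % (k+1), hi⟩ : Fin (k+1)) = t :=
    Fin.ext hval
  have := congrFun (h ⟨t.val/(k+1), hm⟩) ⟨t.val % (k+1), hi⟩
  rw [show restrictBlock g (⟨t.val/(k+1), hm⟩ : Fin n) (⟨t.val % (k+1), hi⟩ : Fin (k+1))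
      = g (blockIdx ⟨t.val/(k+1), hm⟩ ⟨t.val % (k+1), hi⟩) from rfl,
    show restrictBlock g' (⟨t.val/(k+1), hm⟩ : Fin n) (⟨t.val % (k+1), hi⟩ : Fin (k+1))
      = g' (blockIdx ⟨t.val/(k+1), hm⟩ ⟨t.val % (k+1), hi⟩) from rfl, hfin] at this
  exact this

lemma card_multi_le (n k : ℕ) :
    Fintype.card {g : Fin (n*(k+1)) → Bool // ∀ m, m < n → ¬ AltF (extF g) (m*(k+1)) k}
      ≤ (2^(k+1) - 2)^n := by
  classical
  have hcard1 : Fintype.card {h : Fin (k+1) → Bool // ¬ AltF (extF h) 0 k} ≤ 2^(k+1) - 2 := by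
    rw [Fintype.card_subtype_compl (fun h : Fin (k+1) → Bool => AltF (extF h) 0 k)]
    have htot : Fintype.card (Fin (k+1) → Bool) = 2^(k+1) := by simp
    rw [htot]
    exact Nat.sub_le_sub_left (two_le_card_altF k) _
  have hstep : Fintype.card (Fin n → {h : Fin (k+1) → Bool // ¬ AltF (extF h) 0 k})
      = (Fintype.card {h : Fin (k+1) → Bool // ¬ AltF (extF h) 0 k})^n := by
    simp [Fintype.card_fun]
  refine le_trans (Fintype.card_le_of_injective
    (fun (g : {g : Fin (n*(k+1)) → Bool // ∀ m, m < n → ¬ AltF (extF g) (m*(k+1)) k})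
        (m : Fin n) => (⟨restrictBlock g.1 m,
      fun hA => g.2 m.val m.isLt ((altF_restrict_iff g.1 m).1 hA)⟩ :
        {h : Fin (k+1) → Bool // ¬ AltF (extF h) 0 k})) ?_) ?_
  · intro g g' h
    apply Subtype.ext; apply restrict_inj
    intro m
    exact congrArg Subtype.val (congrFun h m)
  · rw [hstep]
    exact Nat.pow_le_pow_left hcard1 n

end OneLeLiminfAux

section Measures

open OneLeLiminfAux

variable {Ω : Type*} [MeasurableSpace Ω] {P : Measure Ω} [IsProbabilityMeasure P]
  {X : ℕ → Ω → Bool}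

/-- the window map -/
def Wmap (X : ℕ → Ω → Bool) (a L : ℕ) : Ω → (Fin L → Bool) := fun ω i => X (a + i.val) ω

lemma meas_exact (hindep : iIndepFun X P)
    (hfair : ∀ i b, P {ω | X i ω = b} = 1 / 2) (a L : ℕ) (g : Fin L → Bool) :
    P {ω | Wmap X a L ω = g} = 2⁻¹ ^ L := by
  have hset : {ω | Wmap X a L ω = g}
      = ⋂ j ∈ (Finset.range L).image (a + ·), X j ⁻¹' {extF g (j - a)} := by
    ext ω
    simp only [Set.mem_setOf_eq, Set.mem_iInter, Finset.mem_image, Finset.mem_range,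
      Set.mem_preimage, Set.mem_singleton_iff, funext_iff]
    constructor
    · rintro h j ⟨i, hi, rfl⟩
      rw [Nat.add_sub_cancel_left, extF_lt g hi]
      exact h ⟨i, hi⟩
    · intro h i
      have := h (a + i.val) ⟨i.val, i.isLt, rfl⟩
      rw [Nat.add_sub_cancel_left, extF_lt g i.isLt, Fin.eta] at this
      exact this
  rw [hset, hindep.measure_inter_preimage_eq_mul _ (fun i _ => measurableSet_singleton _)]
  rw [Finset.prod_image (by intro x _ y _ h; simp only at h; omega)]
  have hval : ∀ i ∈ Finset.range L, P (X (a+i) ⁻¹' {extF g (a+i-a)}) = 2⁻¹ := by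
    intro i _
    have := hfair (a+i) (extF g (a+i-a))
    rw [show X (a+i) ⁻¹' {extF g (a+i-a)} = {ω | X (a+i) ω = extF g (a+i-a)} from rfl, this]
    rw [one_div]
  rw [Finset.prod_congr rfl hval, Finset.prod_const, Finset.card_range]

lemma meas_W_preimage (hmeas : ∀ i, Measurable (X i))
    (hindep : iIndepFun X P)
    (hfair : ∀ i b, P {ω | X i ω = b} = 1 / 2) (a L : ℕ) (T : Finset (Fin L → Bool)) :
    P (Wmap X a L ⁻¹' ↑T) = T.card * 2⁻¹ ^ L := by
  have hU : Wmap X a L ⁻¹' ↑T = ⋃ g ∈ T, {ω | Wmap X a L ω = g} := by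
    ext ω; simp [Set.mem_iUnion, eq_comm]
  rw [hU, measure_biUnion_finset ?disj ?meas]
  · rw [Finset.sum_congr rfl (fun g _ => meas_exact hindep hfair a L g), Finset.sum_const,
      nsmul_eq_mul]
  case disj =>
    intro g hg g' hg' hne
    simp only [Function.onFun]
    rw [Set.disjoint_left]
    rintro ω h1 h2
    exact hne (h1.symm.trans h2)
  case meas =>
    intro g hg
    have : {ω | Wmap X a L ω = g} = ⋂ i : Fin L, X (a+i.val) ⁻¹' {g i} := by
      ext ω; simp [funext_iff, Wmap]
    rw [this]
    exact MeasurableSet.iInter fun i => (hmeas _) (measurableSet_singleton _)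

lemma P_single (hmeas : ∀ i, Measurable (X i))
    (hindep : iIndepFun X P)
    (hfair : ∀ i b, P {ω | X i ω = b} = 1 / 2) (a k : ℕ) :
    P {ω | AltBlock X ω a k} ≤ 2⁻¹ ^ k := by
  classical
  have hev : {ω | AltBlock X ω a k}
      = Wmap X a (k+1) ⁻¹'
        ↑(Finset.univ.filter (fun g : Fin (k+1) → Bool => AltF (extF g) 0 k)) := by
    ext ω
    simp only [Set.mem_setOf_eq, Set.mem_preimage, Finset.coe_filter, Finset.mem_univ, true_and]
    constructor
    · intro H t ht1 ht2
      rw [extF_lt _ (by omega), extF_lt _ (by omega)]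
      have := H (a+t) (by omega) (by omega)
      show X (a+t) ω ≠ X (a+(t+1)) ω
      rwa [show a+(t+1) = (a+t)+1 from by omega]
    · intro H i h1 h2
      obtain ⟨t, rfl⟩ : ∃ t, i = a + t := ⟨i - a, by omega⟩
      have := H t (Nat.zero_le _) (by omega)
      rw [extF_lt _ (by omega), extF_lt _ (by omega)] at this
      show X (a+t) ω ≠ X ((a+t)+1) ω
      rwa [show (a+t)+1 = a+(t+1) from by omega]
  rw [hev, meas_W_preimage hmeas hindep hfair]
  have hcard : (Finset.univ.filter (fun g : Fin (k+1) → Bool => AltF (extF g) 0 k)).card ≤ 2 := by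
    rw [← Fintype.card_subtype]
    exact card_altF_le k
  calc ((Finset.univ.filter (fun g : Fin (k+1) → Bool => AltF (extF g) 0 k)).card : ℝ≥0∞)
        * 2⁻¹^(k+1) ≤ 2 * 2⁻¹^(k+1) := by
        apply mul_le_mul_left
        exact_mod_cast hcard
    _ = 2⁻¹ ^ k := by
        rw [pow_succ', ← mul_assoc, ENNReal.mul_inv_cancel (by norm_num) (by norm_num), one_mul]

lemma P_multi (hmeas : ∀ i, Measurable (X i))
    (hindep : iIndepFun X P)
    (hfair : ∀ i b, P {ω | X i ω = b} = 1 / 2) (n k : ℕ) :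
    P {ω | ∀ m, m < n → ¬ AltBlock X ω (m*(k+1)) k}
      ≤ ((2^(k+1) - 2 : ℕ) : ℝ≥0∞)^n * 2⁻¹ ^ (n*(k+1)) := by
  classical
  have hagree : ∀ (ω : Ω) (i : ℕ), i < n*(k+1) →
      X i ω = extF (Wmap X 0 (n*(k+1)) ω) i := by
    intro ω i h
    rw [extF_lt _ h]
    show X i ω = X (0 + i) ω
    rw [Nat.zero_add]
  have hiff : ∀ (ω : Ω) (m : ℕ), m < n →
      (AltBlock X ω (m*(k+1)) k ↔ AltF (extF (Wmap X 0 (n*(k+1)) ω)) (m*(k+1)) k) := by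
    intro ω m hm
    have hub : m*(k+1) + k < n*(k+1) := by
      have : (m+1)*(k+1) ≤ n*(k+1) := Nat.mul_le_mul_right _ (by omega)
      calc m*(k+1) + k < (m+1)*(k+1) := by ring_nf; omega
      _ ≤ n*(k+1) := this
    exact altF_congr (fun i h1 h2 => hagree ω i (by omega))
  have hev : {ω | ∀ m, m < n → ¬ AltBlock X ω (m*(k+1)) k}
      = Wmap X 0 (n*(k+1)) ⁻¹'
        ↑(Finset.univ.filter
          (fun g : Fin (n*(k+1)) → Bool => ∀ m, m < n → ¬ AltF (extF g) (m*(k+1)) k)) := by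
    ext ω
    simp only [Set.mem_setOf_eq, Set.mem_preimage, Finset.coe_filter, Finset.mem_univ, true_and]
    constructor
    · intro H m hm hA
      exact H m hm ((hiff ω m hm).2 hA)
    · intro H m hm hA
      exact H m hm ((hiff ω m hm).1 hA)
  rw [hev, meas_W_preimage hmeas hindep hfair]
  apply mul_le_mul_left
  have hcard : (Finset.univ.filter
      (fun g : Fin (n*(k+1)) → Bool => ∀ m, m < n → ¬ AltF (extF g) (m*(k+1)) k)).card
      ≤ (2^(k+1) - 2)^n := by
    rw [← Fintype.card_subtype]
    exact card_multi_le n k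
  calc ((Finset.univ.filter
      (fun g : Fin (n*(k+1)) → Bool => ∀ m, m < n → ¬ AltF (extF g) (m*(k+1)) k)).card : ℝ≥0∞)
      ≤ (((2^(k+1) - 2)^n : ℕ) : ℝ≥0∞) := by exact_mod_cast hcard
  _ = ((2^(k+1) - 2 : ℕ) : ℝ≥0∞)^n := by push_cast; ring

lemma bridge (k n j : ℕ) (hjn : j * 2^k ≤ n) :
    ((2^(k+1) - 2 : ℕ) : ℝ≥0∞)^n * 2⁻¹ ^ (n*(k+1)) ≤ 2⁻¹ ^ j := by
  set c : ℕ := 2^(k+1) - 2 with hc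
  have h2k : 2 ≤ 2^(k+1) := by
    calc (2:ℕ) = 2^1 := (pow_one 2).symm
    _ ≤ 2^(k+1) := Nat.pow_le_pow_right (by norm_num) (by omega)
  have hcr : (c:ℝ) = 2^(k+1) - 2 := by
    rw [hc]; push_cast [h2k]; ring
  have key : (c:ℝ) * 2⁻¹^(k+1) = 1 - 2⁻¹^k := by
    rw [hcr, inv_pow, inv_pow]
    field_simp
    ring
  have h0 : (0:ℝ) ≤ (c:ℝ) * 2⁻¹^(k+1) := by positivity
  have hx1 : (2⁻¹:ℝ)^k ≤ 1 := by
    apply pow_le_one₀ <;> norm_num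
  have h1 : (c:ℝ) * 2⁻¹^(k+1) ≤ Real.exp (-(2⁻¹^k)) := by
    rw [key]
    linarith [Real.add_one_le_exp (-(2⁻¹:ℝ)^k)]
  have h2 : ((c:ℝ) * 2⁻¹^(k+1))^n ≤ Real.exp (-((n:ℝ) * 2⁻¹^k)) := by
    calc ((c:ℝ) * 2⁻¹^(k+1))^n ≤ Real.exp (-(2⁻¹^k))^n := pow_le_pow_left₀ h0 h1 n
    _ = Real.exp ((n:ℝ) * (-(2⁻¹^k))) := by rw [← Real.exp_nat_mul]
    _ = Real.exp (-((n:ℝ) * 2⁻¹^k)) := by ring_nf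
  have h3 : Real.exp (-((n:ℝ) * 2⁻¹^k)) ≤ 2⁻¹ ^ j := by
    have e1 : (2⁻¹:ℝ)^j = Real.exp (-((j:ℝ) * Real.log 2)) := by
      rw [← Real.exp_log (show (0:ℝ) < 2⁻¹^j by positivity), Real.log_pow, Real.log_inv]
      ring_nf
    rw [e1]
    apply Real.exp_le_exp.2
    have hlog2 : Real.log 2 ≤ 1 := by
      linarith [Real.log_le_sub_one_of_pos (show (0:ℝ) < 2 by norm_num)]
    have hlogpos : 0 ≤ Real.log 2 := Real.log_nonneg one_le_two
    have hjx : (j:ℝ) ≤ (n:ℝ) * 2⁻¹^k := by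
      have hcast : (j:ℝ) * 2^k ≤ (n:ℝ) := by exact_mod_cast hjn
      have e2 : (j:ℝ) = (j:ℝ) * 2^k * 2⁻¹^k := by
        rw [mul_assoc, ← mul_pow]; norm_num
      rw [e2]
      exact mul_le_mul_of_nonneg_right hcast (by positivity)
    have hj0 : (0:ℝ) ≤ j := Nat.cast_nonneg j
    nlinarith
  have hreal : ((c:ℕ):ℝ)^n * 2⁻¹^(n*(k+1)) ≤ 2⁻¹^j := by
    calc ((c:ℕ):ℝ)^n * 2⁻¹^(n*(k+1)) = ((c:ℝ) * 2⁻¹^(k+1))^n := by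
          rw [show n*(k+1) = (k+1)*n from Nat.mul_comm n (k+1), pow_mul, ← mul_pow]
    _ ≤ Real.exp (-((n:ℝ) * 2⁻¹^k)) := h2
    _ ≤ 2⁻¹^j := h3
  have e1 : ((c:ℕ) : ℝ≥0∞)^n * 2⁻¹^(n*(k+1))
      = ENNReal.ofReal (((c:ℕ):ℝ)^n * 2⁻¹^(n*(k+1))) := by
    rw [ENNReal.ofReal_mul (by positivity), ENNReal.ofReal_pow (by positivity),
      ENNReal.ofReal_pow (by positivity), ENNReal.ofReal_natCast,
      ENNReal.ofReal_inv_of_pos (by norm_num), ENNReal.ofReal_ofNat]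
  have e2 : (2⁻¹ : ℝ≥0∞)^j = ENNReal.ofReal ((2⁻¹:ℝ)^j) := by
    rw [ENNReal.ofReal_pow (by positivity), ENNReal.ofReal_inv_of_pos (by norm_num),
      ENNReal.ofReal_ofNat]
  rw [e1, e2]
  exact ENNReal.ofReal_le_ofReal hreal

lemma poly_le_two_pow (c : ℕ) : ∀ᶠ q in atTop, c * (q+1)^2 ≤ 2^q := by
  have h := isLittleO_pow_const_const_pow_of_one_lt (R := ℝ) 2 (by norm_num : (1:ℝ) < 2)
  have h2 := h.def (show (0:ℝ) < 1/(4*c+1) by positivity)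
  filter_upwards [h2, eventually_ge_atTop 1] with q hq hq1
  simp only [norm_pow, Real.norm_natCast, Real.norm_ofNat] at hq
  have hq1' : (1:ℝ) ≤ q := by exact_mod_cast hq1
  have hQ : ((c:ℝ)) * ((q:ℝ)+1)^2 ≤ 2^q := by
    have hb : ((q:ℝ)+1)^2 ≤ 4*(q:ℝ)^2 := by nlinarith
    have hc0 : (0:ℝ) ≤ c := Nat.cast_nonneg c
    have hp : (0:ℝ) ≤ (2:ℝ)^q := by positivity
    have hq' : ((q:ℝ)^2) * (4*(c:ℝ)+1) ≤ 2^q := by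
      rw [one_div_mul_eq_div, le_div_iff₀ (by positivity)] at hq
      exact hq
    nlinarith [mul_le_mul_of_nonneg_left hb hc0, sq_nonneg (q:ℝ)]
  have : ((c * (q+1)^2 : ℕ) : ℝ) ≤ ((2^q : ℕ) : ℝ) := by push_cast; exact hQ
  exact_mod_cast this

lemma tsum_ne_top_of_ev {Ω : Type*} [MeasurableSpace Ω] {μ : Measure Ω} [IsProbabilityMeasure μ]
    {s : ℕ → Set Ω} (h : ∀ᶠ j in atTop, μ (s j) ≤ 2⁻¹ ^ j) : (∑' j, μ (s j)) ≠ ⊤ := by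
  obtain ⟨J, hJ⟩ := eventually_atTop.1 h
  have hone : ∀ j : ℕ, (1:ℝ≥0∞) ≤ 2^J * 2⁻¹^j ∨ J ≤ j := by
    intro j
    rcases le_or_gt J j with hj | hj
    · exact Or.inr hj
    · left
      have hcan : (2:ℝ≥0∞)^j * 2⁻¹^j = 1 := by
        rw [← mul_pow, ENNReal.mul_inv_cancel (by norm_num) (by norm_num), one_pow]
      calc (1:ℝ≥0∞) = 2^j * 2⁻¹^j := hcan.symm
      _ ≤ 2^J * 2⁻¹^j := by
          apply mul_le_mul_left
          exact pow_le_pow_right₀ one_le_two (by omega)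
  have hb : ∀ j, μ (s j) ≤ 2^J * 2⁻¹^j := by
    intro j
    rcases hone j with h1 | h1
    · exact le_trans prob_le_one h1
    · refine le_trans (hJ j h1) ?_
      apply le_mul_of_one_le_left (by positivity)
      exact one_le_pow_of_one_le' (one_le_two : (1:ℝ≥0∞) ≤ 2) J
  refine ne_top_of_le_ne_top ?_ (ENNReal.tsum_le_tsum hb)
  rw [ENNReal.tsum_mul_left, ENNReal.tsum_geometric]
  apply ENNReal.mul_ne_top (ENNReal.pow_ne_top (by norm_num))
  have : (1 - 2⁻¹ : ℝ≥0∞) = 2⁻¹ := by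
    rw [ENNReal.sub_eq_of_eq_add (by norm_num)]
    rw [ENNReal.inv_two_add_inv_two]
  rw [this, inv_inv]
  norm_num

end Measures

open OneLeLiminfAux in
/-- Almost surely, `liminf N→∞ M_N / log₂ N ≥ 1`. -/
theorem one_le_liminf_longestSwitch_div_log {Ω : Type*} [MeasurableSpace Ω] (P : Measure Ω) [IsProbabilityMeasure P]
    (X : ℕ → Ω → Bool) (hmeas : ∀ i, Measurable (X i))
    (hindep : iIndepFun X P)
    (hfair : ∀ i b, P {ω | X i ω = b} = 1 / 2) :
    ∀ᵐ ω ∂P, 1 ≤ Filter.liminf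
      (fun N : ℕ => (longestSwitch X N ω : ℝ) / Real.logb 2 N) atTop := by
  classical
  have hSsum : ∀ r : ℕ, (∑' j, P {ω | ∀ m, m < 2^j / ((j - j/(r+1)) + 1) →
      ¬ AltBlock X ω (m*((j - j/(r+1)) + 1)) (j - j/(r+1))}) ≠ ⊤ := by
    intro r
    apply tsum_ne_top_of_ev
    have hcond : ∀ᶠ j in atTop, j * 2^(j - j/(r+1)) * ((j - j/(r+1)) + 1) ≤ 2^j := by
      obtain ⟨Q, hQ⟩ := eventually_atTop.1 (poly_le_two_pow ((r+2)^2))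
      rw [eventually_atTop]
      refine ⟨(r+1) * Q + (r+1), fun j hj => ?_⟩
      set q := j / (r+1) with hq
      have hr1 : 0 < r + 1 := Nat.succ_pos r
      have hqQ : Q ≤ q := (Nat.le_div_iff_mul_le hr1).2 (by rw [Nat.mul_comm]; omega)
      have hjq : j < (r+1)*(q+1) := by
        have h1 := Nat.div_add_mod j (r+1)
        have h2 := Nat.mod_lt j hr1
        calc j = (r+1)*q + j % (r+1) := by rw [hq]; omega
        _ < (r+1)*q + (r+1) := by omega
        _ = (r+1)*(q+1) := by ring
      have hqj : q ≤ j := Nat.div_le_self j (r+1)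
      have hkey : j * ((j - q) + 1) ≤ 2^q := by
        have h3 : j + 1 ≤ (r+2)*(q+1) := by
          calc j + 1 ≤ (r+1)*(q+1) := hjq
          _ ≤ (r+2)*(q+1) := Nat.mul_le_mul_right _ (by omega)
        have h4 : j * ((j - q) + 1) ≤ (j+1)*(j+1) := Nat.mul_le_mul (by omega) (by omega)
        have h5 : (j+1)*(j+1) ≤ ((r+2)*(q+1))*((r+2)*(q+1)) := Nat.mul_le_mul h3 h3
        calc j * ((j - q) + 1) ≤ ((r+2)*(q+1))*((r+2)*(q+1)) := le_trans h4 h5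
        _ = (r+2)^2*(q+1)^2 := by ring
        _ ≤ 2^q := hQ q hqQ
      calc j * 2^(j - q) * ((j - q) + 1) = (j*((j - q)+1)) * 2^(j - q) := by ring
      _ ≤ 2^q * 2^(j - q) := Nat.mul_le_mul_right _ hkey
      _ = 2^j := by rw [← pow_add]; congr 1; omega
    filter_upwards [hcond] with j hj
    have hjn : j * 2^(j - j/(r+1)) ≤ 2^j / ((j - j/(r+1))+1) :=
      (Nat.le_div_iff_mul_le (Nat.succ_pos _)).2 hj
    exact le_trans (P_multi hmeas hindep hfair _ _) (bridge _ _ _ hjn)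
  have hDsum : (∑' j, P (⋃ m ∈ Finset.range (2^j), {ω | AltBlock X ω m (2*j)})) ≠ ⊤ := by
    apply tsum_ne_top_of_ev
    apply Eventually.of_forall
    intro j
    calc P (⋃ m ∈ Finset.range (2^j), {ω | AltBlock X ω m (2*j)})
        ≤ ∑ m ∈ Finset.range (2^j), P {ω | AltBlock X ω m (2*j)} :=
          measure_biUnion_finset_le _ _
    _ ≤ ∑ m ∈ Finset.range (2^j), 2⁻¹^(2*j) :=
          Finset.sum_le_sum (fun m _ => P_single hmeas hindep hfair m (2*j))
    _ = ((2^j : ℕ) : ℝ≥0∞) * 2⁻¹^(2*j) := by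
          rw [Finset.sum_const, Finset.card_range, nsmul_eq_mul]
    _ = 2⁻¹^j := by
          push_cast
          rw [two_mul, pow_add, ← mul_assoc, ← mul_pow,
            ENNReal.mul_inv_cancel (by norm_num) (by norm_num), one_pow, one_mul]
  have hae1 : ∀ᵐ ω ∂P, ∀ r : ℕ, ∀ᶠ j in atTop,
      ω ∉ {ω' | ∀ m, m < 2^j / ((j - j/(r+1)) + 1) →
        ¬ AltBlock X ω' (m*((j - j/(r+1)) + 1)) (j - j/(r+1))} :=
    ae_all_iff.2 fun r => ae_eventually_notMem (hSsum r)
  have hae2 : ∀ᵐ ω ∂P, ∀ᶠ j in atTop,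
      ω ∉ ⋃ m ∈ Finset.range (2^j), {ω' | AltBlock X ω' m (2*j)} :=
    ae_eventually_notMem hDsum
  filter_upwards [hae1, hae2] with ω h1 h2
  have hM1 : ∀ r : ℕ, ∀ᶠ j in atTop, j - j/(r+1) ≤ longestSwitch X (2^j) ω := by
    intro r
    filter_upwards [h1 r] with j hj
    push_neg at hj
    obtain ⟨m, hm, hAlt⟩ := hj
    apply le_longestSwitch _ hAlt
    have hstep : (m+1)*((j - j/(r+1))+1)
        ≤ (2^j/((j - j/(r+1))+1)) * ((j - j/(r+1))+1) := Nat.mul_le_mul_right _ (by omega)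
    have hstep2 := Nat.div_mul_le_self (2^j) ((j - j/(r+1))+1)
    calc m*((j - j/(r+1))+1) + (j - j/(r+1)) + 1 = (m+1)*((j - j/(r+1))+1) := by ring
    _ ≤ (2^j/((j - j/(r+1))+1)) * ((j - j/(r+1))+1) := hstep
    _ ≤ 2^j := hstep2
  have hM2 : ∀ᶠ j in atTop, longestSwitch X (2^j) ω ≤ 2*j := by
    filter_upwards [h2] with j hj
    by_contra hcon
    push_neg at hcon
    obtain ⟨m, hm1, hm2⟩ := exists_of_le_longestSwitch Nat.one_le_two_pow hcon.le
    exact hj (Set.mem_iUnion₂.2 ⟨m, Finset.mem_range.2 (by omega), hm2⟩)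
  have hlogpow : ∀ m : ℕ, Real.logb 2 ((2^m : ℕ) : ℝ) = m := by
    intro m
    rw [Nat.cast_pow, Nat.cast_ofNat, Real.logb_pow, Real.logb_self_eq_one (by norm_num),
      mul_one]
  have hcb : IsCoboundedUnder (· ≥ ·) atTop
      (fun N : ℕ => (longestSwitch X N ω : ℝ) / Real.logb 2 N) := by
    apply Filter.IsCoboundedUnder.of_frequently_le (a := 2)
    have ht : Tendsto (fun j : ℕ => 2^j) atTop atTop :=
      tendsto_pow_atTop_atTop_of_one_lt one_lt_two
    apply ht.frequently
    apply Eventually.frequently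
    filter_upwards [hM2, eventually_ge_atTop 1] with j hj hj1
    show (longestSwitch X (2^j) ω : ℝ) / Real.logb 2 ((2^j : ℕ) : ℝ) ≤ 2
    rw [hlogpow j, div_le_iff₀ (by exact_mod_cast Nat.pos_of_ne_zero (by omega))]
    calc (longestSwitch X (2^j) ω : ℝ) ≤ ((2*j : ℕ) : ℝ) := Nat.cast_le.2 hj
    _ = 2 * (j:ℝ) := by push_cast; ring
  have hmain : ∀ ε : ℝ, 0 < ε →
      1 - ε ≤ liminf (fun N : ℕ => (longestSwitch X N ω : ℝ) / Real.logb 2 N) atTop := by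
    intro ε hε
    apply le_liminf_of_le hcb
    obtain ⟨r, hrε⟩ := exists_nat_ge (2/ε)
    have hr2 : (2:ℝ)/ε ≤ (r:ℝ)+1 := by linarith
    have hrε' : 1/((r:ℝ)+1) ≤ ε/2 := by
      rw [div_le_div_iff₀ (by positivity) (by norm_num)]
      rw [div_le_iff₀ hε] at hr2
      linarith
    obtain ⟨J1, hJ1⟩ := eventually_atTop.1 (hM1 r)
    rw [eventually_atTop]
    refine ⟨2^(max (max J1 ⌈(2:ℝ)/ε⌉₊) 1) + 2, fun N hN => ?_⟩
    set J := max (max J1 ⌈(2:ℝ)/ε⌉₊) 1 with hJdef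
    have hN2 : 2 ≤ N := le_trans (Nat.le_add_left 2 _) hN
    have hN0 : N ≠ 0 := by omega
    set j := Nat.log 2 N with hjdef
    have hj1 : 2^j ≤ N := Nat.pow_log_le_self 2 hN0
    have hj2 : N < 2^(j+1) := Nat.lt_pow_succ_log_self one_lt_two N
    have hjJ : J ≤ j := (Nat.le_log_iff_pow_le one_lt_two hN0).2
      (le_trans (Nat.le_add_right _ 2) hN)
    have hjε : (2:ℝ) ≤ (j:ℝ) * ε := by
      have h1 : (⌈(2:ℝ)/ε⌉₊ : ℝ) ≤ (j:ℝ) := by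
        have hle : ⌈(2:ℝ)/ε⌉₊ ≤ j :=
          le_trans (le_trans (le_max_right J1 _) (le_max_left _ 1)) hjJ
        exact_mod_cast hle
      have h2 : (2:ℝ)/ε ≤ (j:ℝ) := le_trans (Nat.le_ceil _) h1
      rw [div_le_iff₀ hε] at h2
      linarith
    have hMN : j - j/(r+1) ≤ longestSwitch X N ω :=
      le_trans (hJ1 j (by omega)) (longestSwitch_mono Nat.one_le_two_pow hj1)
    have hlogpos : 0 < Real.logb 2 (N:ℝ) :=
      Real.logb_pos (by norm_num) (by exact_mod_cast Nat.lt_of_lt_of_le one_lt_two hN2)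
    have hlogle : Real.logb 2 (N:ℝ) ≤ (j:ℝ)+1 := by
      have hcast : (N:ℝ) ≤ ((2^(j+1):ℕ):ℝ) := by exact_mod_cast hj2.le
      calc Real.logb 2 (N:ℝ) ≤ Real.logb 2 ((2^(j+1):ℕ):ℝ) :=
            Real.logb_le_logb_of_le (by norm_num) (by exact_mod_cast Nat.pos_of_ne_zero hN0)
              hcast
      _ = ((j+1 : ℕ):ℝ) := hlogpow (j+1)
      _ = (j:ℝ)+1 := by push_cast; ring
    have hkfR : (1-ε) * ((j:ℝ)+1) ≤ ((j - j/(r+1) : ℕ) : ℝ) := by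
      have hdlej : j/(r+1) ≤ j := Nat.div_le_self _ _
      have hcast : ((j - j/(r+1) : ℕ) : ℝ) = (j:ℝ) - ((j/(r+1):ℕ):ℝ) := by
        exact Nat.cast_sub hdlej
      have hdle : ((j/(r+1) : ℕ):ℝ) ≤ (j:ℝ)/((r:ℝ)+1) := by
        have hh := Nat.cast_div_le (α := ℝ) (m := j) (n := r+1)
        rwa [Nat.cast_add, Nat.cast_one] at hh
      have h5 : (j:ℝ)/((r:ℝ)+1) ≤ (j:ℝ)*(ε/2) := by
        rw [div_eq_mul_one_div]
        exact mul_le_mul_of_nonneg_left hrε' (Nat.cast_nonneg j)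
      rw [hcast]
      nlinarith [Nat.cast_nonneg (α := ℝ) j, hε.le]
    calc 1 - ε = ((1-ε)*((j:ℝ)+1))/((j:ℝ)+1) := by field_simp
    _ ≤ ((j - j/(r+1) : ℕ) : ℝ)/((j:ℝ)+1) := by
        apply div_le_div_of_nonneg_right hkfR (by positivity) |>.trans_eq rfl
    _ ≤ (longestSwitch X N ω : ℝ) / Real.logb 2 N := by
        exact div_le_div₀ (Nat.cast_nonneg _) (Nat.cast_le.2 hMN) hlogpos hlogle
  by_contra hcon
  push_neg at hcon
  have hfin := hmain
    ((1 - liminf (fun N : ℕ => (longestSwitch X N ω : ℝ) / Real.logb 2 N) atTop)/2)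
    (by linarith)
  linarith
end

section
/- Let (γ_n)_{n≥1} be a sequence of positive real numbers with ∑_{n=1}^∞ 2^{−γ_n} = ∞. Then for almost all ω ∈ Ω there exists an infinite sequence of integers N₁ < N₂ < … (depending on ω and (γ_n)) such that M_{N_i} ≥ γ_{N_i} − 1 for every i. -/
open MeasureTheory ProbabilityTheory Filter
open scoped ENNReal

namespace LSAux

/-- alternating pattern starting at `a` with value `b`. -/
def pat (b : Bool) (a i : ℕ) : Bool := xor b ((i - a).bodd)

lemma pat_self (b a : ℕ → ℕ → Bool) : True := trivial

lemma pat_start (b : Bool) (a : ℕ) : pat b a a = b := by simp [pat]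

lemma pat_succ (b : Bool) (a i : ℕ) (h : a ≤ i) : pat b a (i + 1) = !(pat b a i) := by
  have h1 : i + 1 - a = (i - a) + 1 := by omega
  simp only [pat, h1, Nat.bodd_succ]
  cases b <;> cases (i - a).bodd <;> rfl

variable {Ω : Type*} [MeasurableSpace Ω] {P : Measure Ω} [IsProbabilityMeasure P]
  {X : ℕ → Ω → Bool}

/-- the event that the tosses on `[a, a+k]` follow the alternating pattern with start `b`. -/
def PatSet (X : ℕ → Ω → Bool) (b : Bool) (a k : ℕ) : Set Ω :=
  {ω | ∀ i ∈ Finset.Icc a (a + k), X i ω = pat b a i}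

/-- the event that the block `[a, a+k]` is alternating. -/
def AltSet (X : ℕ → Ω → Bool) (a k : ℕ) : Set Ω := {ω | AltBlock X ω a k}

lemma patSet_subset_altSet (b : Bool) (a k : ℕ) : PatSet X b a k ⊆ AltSet X a k := by
  intro ω hω i hi hik
  have h1 : X i ω = pat b a i := hω i (by simp [Finset.mem_Icc]; omega)
  have h2 : X (i + 1) ω = pat b a (i + 1) := hω (i + 1) (by simp [Finset.mem_Icc]; omega)
  rw [h1, h2, pat_succ b a i hi]
  cases pat b a i <;> simp

lemma altSet_subset_union (a k : ℕ) :
    AltSet X a k ⊆ PatSet X true a k ∪ PatSet X false a k := by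
  intro ω hω
  have key : ∀ d, d ≤ k → X (a + d) ω = pat (X a ω) a (a + d) := by
    intro d
    induction d with
    | zero => intro _; simp [pat_start]
    | succ d ih =>
      intro hd
      have h1 := ih (by omega)
      have h2 : X (a + d) ω ≠ X (a + d + 1) ω := hω (a + d) (by omega) (by omega)
      have h3 : X (a + d + 1) ω = !(X (a + d) ω) := by
        cases honk : X (a + d) ω <;> cases hk2 : X (a + d + 1) ω <;>
          simp_all
      have h4 : a + (d + 1) = (a + d) + 1 := by omega
      rw [h4, h3, h1, ← pat_succ (X a ω) a (a + d) (by omega)]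
  have hmem : ω ∈ PatSet X (X a ω) a k := by
    intro i hi
    simp only [Finset.mem_Icc] at hi
    have : i = a + (i - a) := by omega
    rw [this]
    exact key (i - a) (by omega)
  cases hX : X a ω
  · right; rw [hX] at hmem; exact hmem
  · left; rw [hX] at hmem; exact hmem

lemma eq_set_pattern (s : Finset ℕ) (c : ℕ → Bool) :
    {ω | ∀ i ∈ s, X i ω = c i} = ⋂ i ∈ s, X i ⁻¹' {c i} := by
  ext ω; simp [Set.mem_iInter]

lemma meas_pattern (hindep : iIndepFun X P)
    (hfair : ∀ i b, P {ω | X i ω = b} = 1 / 2) (s : Finset ℕ) (c : ℕ → Bool) :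
    P {ω | ∀ i ∈ s, X i ω = c i} = 2⁻¹ ^ s.card := by
  rw [eq_set_pattern]
  rw [hindep.meas_biInter (fun i _ => ⟨{c i}, measurableSet_singleton _, rfl⟩)]
  have : ∀ i ∈ s, P (X i ⁻¹' {c i}) = 2⁻¹ := by
    intro i _
    have := hfair i (c i)
    rw [one_div] at this
    rw [← this]
    congr 1
  rw [Finset.prod_congr rfl this, Finset.prod_const]

lemma measurable_patSet (hmeas : ∀ i, Measurable (X i)) (b : Bool) (a k : ℕ) :
    MeasurableSet (PatSet X b a k) := by
  rw [show PatSet X b a k = {ω | ∀ i ∈ Finset.Icc a (a+k), X i ω = pat b a i} from rfl,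
    eq_set_pattern]
  exact Set.Finite.measurableSet_biInter (Finset.finite_toSet _)
    (fun i _ => (hmeas i) (measurableSet_singleton _))

lemma measurable_altSet (hmeas : ∀ i, Measurable (X i)) (a k : ℕ) :
    MeasurableSet (AltSet X a k) := by
  have : AltSet X a k = PatSet X true a k ∪ PatSet X false a k :=
    Set.Subset.antisymm (altSet_subset_union a k)
      (Set.union_subset (patSet_subset_altSet _ _ _) (patSet_subset_altSet _ _ _))
  rw [this]
  exact (measurable_patSet hmeas true a k).union (measurable_patSet hmeas false a k)

lemma meas_patSet (hindep : iIndepFun X P)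
    (hfair : ∀ i b, P {ω | X i ω = b} = 1 / 2) (b : Bool) (a k : ℕ) :
    P (PatSet X b a k) = 2⁻¹ ^ (k + 1) := by
  have h := meas_pattern (P := P) hindep hfair (Finset.Icc a (a + k)) (pat b a)
  rw [Nat.card_Icc, show a + k + 1 - a = k + 1 by omega] at h
  exact h

lemma meas_altSet (hmeas : ∀ i, Measurable (X i))
    (hindep : iIndepFun X P)
    (hfair : ∀ i b, P {ω | X i ω = b} = 1 / 2) (a k : ℕ) :
    P (AltSet X a k) = 2⁻¹ ^ k := by
  have hdisj : Disjoint (PatSet X true a k) (PatSet X false a k) := by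
    rw [Set.disjoint_left]
    intro ω h1 h2
    have e1 := h1 a (by simp)
    have e2 := h2 a (by simp)
    rw [pat_start] at e1 e2
    rw [e1] at e2; exact Bool.noConfusion e2
  have hset : AltSet X a k = PatSet X true a k ∪ PatSet X false a k :=
    Set.Subset.antisymm (altSet_subset_union a k)
      (Set.union_subset (patSet_subset_altSet _ _ _) (patSet_subset_altSet _ _ _))
  rw [hset, measure_union hdisj (measurable_patSet hmeas false a k),
    meas_patSet hindep hfair, meas_patSet hindep hfair, pow_succ]
  rw [← mul_add]
  have : (2⁻¹ : ℝ≥0∞) + 2⁻¹ = 1 := by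
    rw [← one_div]; exact ENNReal.add_halves 1
  rw [this, mul_one]

lemma altBlock_mono {ω : Ω} {a k a' k' : ℕ} (h1 : a ≤ a') (h2 : a' + k' ≤ a + k)
    (h : AltBlock X ω a k) : AltBlock X ω a' k' :=
  fun i hi hik => h i (le_trans h1 hi) (by omega)

lemma inter_alt_subset (a₁ k₁ a₂ k₂ K : ℕ) (h1 : a₂ ≤ a₁ + k₁) (h2 : a₁ + K = a₂ + k₂) :
    AltSet X a₁ k₁ ∩ AltSet X a₂ k₂ ⊆ AltSet X a₁ K := by
  rintro ω ⟨H1, H2⟩ i hi hiK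
  by_cases hc : i < a₁ + k₁
  · exact H1 i hi hc
  · exact H2 i (by omega) (by omega)

lemma meas_inter_le_of_lt (hmeas : ∀ i, Measurable (X i))
    (hindep : iIndepFun X P)
    (hfair : ∀ i b, P {ω | X i ω = b} = 1 / 2)
    (a₁ k₁ a₂ k₂ : ℕ) (h : a₁ + k₁ < a₂) :
    P (AltSet X a₁ k₁ ∩ AltSet X a₂ k₂) ≤ 2⁻¹ ^ k₁ * 2⁻¹ ^ k₂ := by
  classical
  have key : ∀ b₁ b₂ : Bool, P (PatSet X b₁ a₁ k₁ ∩ PatSet X b₂ a₂ k₂)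
      = 2⁻¹ ^ (k₁ + 1 + (k₂ + 1)) := by
    intro b₁ b₂
    set c : ℕ → Bool := fun i => if i ≤ a₁ + k₁ then pat b₁ a₁ i else pat b₂ a₂ i with hc
    have hset : PatSet X b₁ a₁ k₁ ∩ PatSet X b₂ a₂ k₂
        = {ω | ∀ i ∈ Finset.Icc a₁ (a₁ + k₁) ∪ Finset.Icc a₂ (a₂ + k₂), X i ω = c i} := by
      ext ω
      simp only [Set.mem_inter_iff, Set.mem_setOf_eq, Finset.mem_union, PatSet, hc]
      constructor
      · rintro ⟨H1, H2⟩ i hi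
        rcases hi with hi | hi
        · have hle : i ≤ a₁ + k₁ := (Finset.mem_Icc.mp hi).2
          rw [if_pos hle]; exact H1 i hi
        · have hgt : ¬ i ≤ a₁ + k₁ := by
            have := (Finset.mem_Icc.mp hi).1; omega
          rw [if_neg hgt]; exact H2 i hi
      · intro H
        constructor
        · intro i hi
          have hle : i ≤ a₁ + k₁ := (Finset.mem_Icc.mp hi).2
          have := H i (Or.inl hi); rw [if_pos hle] at this; exact this
        · intro i hi
          have hgt : ¬ i ≤ a₁ + k₁ := by
            have := (Finset.mem_Icc.mp hi).1; omega
          have := H i (Or.inr hi); rw [if_neg hgt] at this; exact this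
    have hdisj : Disjoint (Finset.Icc a₁ (a₁ + k₁)) (Finset.Icc a₂ (a₂ + k₂)) := by
      rw [Finset.disjoint_left]
      intro i hi1 hi2
      have := Finset.mem_Icc.mp hi1
      have := Finset.mem_Icc.mp hi2
      omega
    rw [hset, meas_pattern hindep hfair, Finset.card_union_of_disjoint hdisj,
      Nat.card_Icc, Nat.card_Icc, show a₁ + k₁ + 1 - a₁ = k₁ + 1 by omega,
      show a₂ + k₂ + 1 - a₂ = k₂ + 1 by omega]
  have hsub : AltSet X a₁ k₁ ∩ AltSet X a₂ k₂ ⊆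
      (PatSet X true a₁ k₁ ∩ PatSet X true a₂ k₂) ∪
      ((PatSet X true a₁ k₁ ∩ PatSet X false a₂ k₂) ∪
      ((PatSet X false a₁ k₁ ∩ PatSet X true a₂ k₂) ∪
      (PatSet X false a₁ k₁ ∩ PatSet X false a₂ k₂))) := by
    rintro ω ⟨h1, h2⟩
    rcases altSet_subset_union a₁ k₁ h1 with p1 | p1 <;>
      rcases altSet_subset_union a₂ k₂ h2 with p2 | p2
    · exact Or.inl ⟨p1, p2⟩
    · exact Or.inr (Or.inl ⟨p1, p2⟩)
    · exact Or.inr (Or.inr (Or.inl ⟨p1, p2⟩))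
    · exact Or.inr (Or.inr (Or.inr ⟨p1, p2⟩))
  calc P (AltSet X a₁ k₁ ∩ AltSet X a₂ k₂)
      ≤ P ((PatSet X true a₁ k₁ ∩ PatSet X true a₂ k₂)) +
        (P ((PatSet X true a₁ k₁ ∩ PatSet X false a₂ k₂)) +
        (P ((PatSet X false a₁ k₁ ∩ PatSet X true a₂ k₂)) +
        P ((PatSet X false a₁ k₁ ∩ PatSet X false a₂ k₂)))) := by
        refine le_trans (measure_mono hsub) ?_
        refine le_trans (measure_union_le _ _) ?_
        gcongr
        refine le_trans (measure_union_le _ _) ?_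
        gcongr
        exact measure_union_le _ _
    _ = 2⁻¹ ^ k₁ * 2⁻¹ ^ k₂ := by
        rw [key, key, key, key]
        have hx : (2⁻¹:ℝ≥0∞) ^ (k₁ + 1 + (k₂ + 1)) = 2⁻¹ ^ k₁ * 2⁻¹ ^ k₂ * 4⁻¹ := by
          rw [show k₁ + 1 + (k₂ + 1) = k₁ + k₂ + 2 by omega, pow_add, pow_add, pow_two,
            ← ENNReal.mul_inv (by norm_num) (by norm_num)]
          norm_num
        rw [hx]
        have h3 : ∀ y : ℝ≥0∞, y * 4⁻¹ + (y * 4⁻¹ + (y * 4⁻¹ + y * 4⁻¹)) = y * (4 * 4⁻¹) := by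
          intro y; ring
        rw [h3, ENNReal.mul_inv_cancel (by norm_num) (by norm_num), mul_one]

lemma geom_sum_le_one (F : Finset ℕ) (m : ℕ) :
    ∑ n ∈ F, (if m < n then (2⁻¹ : ℝ≥0∞) ^ (n - m) else 0) ≤ 1 := by
  classical
  have h0 : ∑ n ∈ F, (if m < n then (2⁻¹ : ℝ≥0∞) ^ (n - m) else 0)
      = ∑ n ∈ F.filter (fun n => m < n), (2⁻¹ : ℝ≥0∞) ^ (n - m) :=
    (Finset.sum_filter _ _).symm
  have h1 : ∑ n ∈ F.filter (fun n => m < n), (2⁻¹ : ℝ≥0∞) ^ (n - m)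
      = ∑ d ∈ (F.filter (fun n => m < n)).image (fun n => n - (m + 1)),
          (2⁻¹ : ℝ≥0∞) ^ (d + 1) := by
    rw [Finset.sum_image (fun x hx y hy hxy => by
      have hx' := (Finset.mem_filter.mp hx).2
      have hy' := (Finset.mem_filter.mp hy).2
      omega)]
    refine Finset.sum_congr rfl fun n hn => ?_
    have := (Finset.mem_filter.mp hn).2
    congr 1
    omega
  rw [h0, h1]
  refine le_trans (ENNReal.sum_le_tsum _) ?_
  rw [ENNReal.tsum_geometric_add_one, ENNReal.one_sub_inv_two, inv_inv]
  rw [ENNReal.inv_mul_cancel (by norm_num) (by norm_num)]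

lemma key_ineq (hmeas : ∀ i, Measurable (X i))
    (hindep : iIndepFun X P)
    (hfair : ∀ i b, P {ω | X i ω = b} = 1 / 2)
    (γ : ℕ → ℝ) (hγ : ∀ n, 0 < γ n)
    (F : Finset ℕ) (hF : ∀ n ∈ F, ⌈γ n⌉₊ ≤ n) :
    (∑ n ∈ F, (2⁻¹ : ℝ≥0∞) ^ (⌈γ n⌉₊ - 1)) ≤
      ((∑ n ∈ F, (2⁻¹ : ℝ≥0∞) ^ (⌈γ n⌉₊ - 1)) + 3) *
        P (⋃ n ∈ F, AltSet X (n - ⌈γ n⌉₊) (⌈γ n⌉₊ - 1)) := by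
  classical
  set k : ℕ → ℕ := fun n => ⌈γ n⌉₊ - 1 with hk
  set a : ℕ → ℕ := fun n => n - ⌈γ n⌉₊ with ha
  set q : ℕ → ℝ≥0∞ := fun n => (2⁻¹ : ℝ≥0∞) ^ (k n) with hq
  set A : ℕ → Set Ω := fun n => AltSet X (a n) (k n) with hA
  set S : ℝ≥0∞ := ∑ n ∈ F, q n with hS
  have hceil : ∀ n ∈ F, 1 ≤ ⌈γ n⌉₊ := fun n _ => Nat.ceil_pos.mpr (hγ n)
  have hakn : ∀ n ∈ F, a n + k n + 1 = n := by
    intro n hn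
    have h1 := hceil n hn
    have h2 := hF n hn
    simp only [ha, hk]
    omega
  have hAmeas : ∀ n, MeasurableSet (A n) := fun n => measurable_altSet hmeas _ _
  have hPA : ∀ n, P (A n) = q n := fun n => meas_altSet hmeas hindep hfair _ _
  have hpair : ∀ m ∈ F, ∀ n ∈ F, m < n →
      P (A m ∩ A n) ≤ q m * q n + q m * 2⁻¹ ^ (n - m) := by
    intro m hm n hn hmn
    by_cases hcase : a n ≤ a m + k m
    · have hsub := inter_alt_subset (X := X) (a m) (k m) (a n) (k n) (k m + (n - m)) hcase
        (by have := hakn m hm; have := hakn n hn; omega)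
      calc P (A m ∩ A n) ≤ P (AltSet X (a m) (k m + (n - m))) := measure_mono hsub
        _ = 2⁻¹ ^ (k m + (n - m)) := meas_altSet hmeas hindep hfair _ _
        _ = q m * 2⁻¹ ^ (n - m) := by rw [pow_add]
        _ ≤ q m * q n + q m * 2⁻¹ ^ (n - m) := le_add_self
    · have hlt : a m + k m < a n := by omega
      calc P (A m ∩ A n) ≤ 2⁻¹ ^ (k m) * 2⁻¹ ^ (k n) :=
          meas_inter_le_of_lt hmeas hindep hfair _ _ _ _ hlt
        _ ≤ q m * q n + q m * 2⁻¹ ^ (n - m) := le_self_add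
  set U : Set Ω := ⋃ n ∈ F, A n with hU
  have hUmeas : MeasurableSet U :=
    MeasurableSet.biUnion (Finset.countable_toSet F) (fun n _ => hAmeas n)
  set Z : Ω → ℝ≥0∞ := fun ω => ∑ n ∈ F, (A n).indicator 1 ω with hZ
  have hZm : Measurable Z :=
    Finset.measurable_sum _ (fun n _ => measurable_const.indicator (hAmeas n))
  have hZint : ∫⁻ ω, Z ω ∂P = S := by
    simp only [hZ]
    rw [lintegral_finset_sum F (f := fun n ω => (A n).indicator 1 ω)
      (fun n _ => measurable_const.indicator (hAmeas n))]
    exact Finset.sum_congr rfl fun n _ => by rw [lintegral_indicator_one (hAmeas n), hPA]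
  have hZsq : ∫⁻ ω, Z ω * Z ω ∂P = ∑ m ∈ F, ∑ n ∈ F, P (A m ∩ A n) := by
    have expand : ∀ ω, Z ω * Z ω = ∑ m ∈ F, ∑ n ∈ F, ((A m ∩ A n).indicator 1 ω) := by
      intro ω
      rw [hZ]
      rw [show (∑ n ∈ F, (A n).indicator (1 : Ω → ℝ≥0∞) ω) * (∑ n ∈ F, (A n).indicator 1 ω)
        = ∑ m ∈ F, ∑ n ∈ F, (A m).indicator 1 ω * (A n).indicator 1 ω from by
          rw [Finset.sum_mul_sum]]
      exact Finset.sum_congr rfl fun m _ => Finset.sum_congr rfl fun n _ =>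
        (congrFun (Set.inter_indicator_one) ω).symm
    simp only [expand]
    rw [lintegral_finset_sum F (f := fun m ω => ∑ n ∈ F, (A m ∩ A n).indicator 1 ω)
      (fun m _ => Finset.measurable_sum _
      (fun n _ => measurable_const.indicator ((hAmeas m).inter (hAmeas n))))]
    refine Finset.sum_congr rfl fun m _ => ?_
    rw [lintegral_finset_sum F (f := fun n ω => (A m ∩ A n).indicator 1 ω)
      (fun n _ => measurable_const.indicator ((hAmeas m).inter (hAmeas n)))]
    exact Finset.sum_congr rfl fun n _ => lintegral_indicator_one ((hAmeas m).inter (hAmeas n))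
  have hdouble : ∑ m ∈ F, ∑ n ∈ F, P (A m ∩ A n) ≤ S * S + 3 * S := by
    have hterm : ∀ m ∈ F, ∀ n ∈ F, P (A m ∩ A n) ≤ q m * q n +
        ((if m < n then q m * 2⁻¹ ^ (n - m) else 0) +
         ((if n < m then q n * 2⁻¹ ^ (m - n) else 0) + (if m = n then q m else 0))) := by
      intro m hm n hn
      rcases lt_trichotomy m n with h | h | h
      · rw [if_pos h, if_neg (by omega), if_neg (by omega), add_zero, add_zero]
        exact hpair m hm n hn h
      · subst h
        rw [Set.inter_self, hPA, if_neg (lt_irrefl m), if_pos rfl, zero_add, zero_add]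
        exact le_add_self
      · rw [if_neg (by omega), if_pos h, if_neg (by omega), zero_add, add_zero]
        rw [Set.inter_comm]
        refine le_trans (hpair n hn m hm h) ?_
        rw [mul_comm (q n) (q m)]
    calc ∑ m ∈ F, ∑ n ∈ F, P (A m ∩ A n)
        ≤ ∑ m ∈ F, ∑ n ∈ F, (q m * q n +
            ((if m < n then q m * 2⁻¹ ^ (n - m) else 0) +
             ((if n < m then q n * 2⁻¹ ^ (m - n) else 0) + (if m = n then q m else 0)))) :=
          Finset.sum_le_sum fun m hm => Finset.sum_le_sum fun n hn => hterm m hm n hn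
      _ = (∑ m ∈ F, ∑ n ∈ F, q m * q n) +
          ((∑ m ∈ F, ∑ n ∈ F, (if m < n then q m * 2⁻¹ ^ (n - m) else 0)) +
           ((∑ m ∈ F, ∑ n ∈ F, (if n < m then q n * 2⁻¹ ^ (m - n) else 0)) +
            (∑ m ∈ F, ∑ n ∈ F, (if m = n then q m else 0)))) := by
          simp only [Finset.sum_add_distrib]
      _ ≤ S * S + (S + (S + S)) := by
          gcongr
          · exact le_of_eq (Finset.sum_mul_sum F F q q).symm
          · calc ∑ m ∈ F, ∑ n ∈ F, (if m < n then q m * 2⁻¹ ^ (n - m) else 0)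
                = ∑ m ∈ F, q m * ∑ n ∈ F, (if m < n then (2⁻¹:ℝ≥0∞) ^ (n - m) else 0) := by
                  refine Finset.sum_congr rfl fun m _ => ?_
                  rw [Finset.mul_sum]
                  refine Finset.sum_congr rfl fun n _ => ?_
                  split <;> simp
              _ ≤ ∑ m ∈ F, q m * 1 :=
                  Finset.sum_le_sum fun m _ => mul_le_mul_right (geom_sum_le_one F m) _
              _ = S := by simp [hS]
          · calc ∑ m ∈ F, ∑ n ∈ F, (if n < m then q n * 2⁻¹ ^ (m - n) else 0)
                = ∑ n ∈ F, ∑ m ∈ F, (if n < m then q n * 2⁻¹ ^ (m - n) else 0) :=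
                  Finset.sum_comm
              _ = ∑ n ∈ F, q n * ∑ m ∈ F, (if n < m then (2⁻¹:ℝ≥0∞) ^ (m - n) else 0) := by
                  refine Finset.sum_congr rfl fun n _ => ?_
                  rw [Finset.mul_sum]
                  refine Finset.sum_congr rfl fun m _ => ?_
                  split <;> simp
              _ ≤ ∑ n ∈ F, q n * 1 :=
                  Finset.sum_le_sum fun n _ => mul_le_mul_right (geom_sum_le_one F n) _
              _ = S := by simp [hS]
          · refine le_of_eq ?_
            calc ∑ m ∈ F, ∑ n ∈ F, (if m = n then q m else 0)
                = ∑ m ∈ F, q m := by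
                  refine Finset.sum_congr rfl fun m hm => ?_
                  rw [Finset.sum_ite_eq F m (fun _ => q m), if_pos hm]
              _ = S := rfl
      _ = S * S + 3 * S := by ring
  -- Cauchy–Schwarz
  have hZsupp : (Z * U.indicator 1) = Z := by
    funext ω
    show Z ω * U.indicator 1 ω = Z ω
    by_cases hω : ω ∈ U
    · rw [Set.indicator_of_mem hω]; simp
    · have hz : Z ω = 0 := Finset.sum_eq_zero fun n hn =>
        Set.indicator_of_notMem (fun hmem => hω (Set.mem_biUnion hn hmem)) _
      rw [hz, zero_mul]
  have hconj : Real.HolderConjugate 2 2 := Real.HolderConjugate.two_two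
  have hCS := ENNReal.lintegral_mul_le_Lp_mul_Lq P hconj hZm.aemeasurable
    (measurable_const.indicator hUmeas).aemeasurable (f := Z) (g := U.indicator 1)
  rw [hZsupp, hZint] at hCS
  have hind2 : ∫⁻ ω, (U.indicator (1:Ω → ℝ≥0∞) ω) ^ (2:ℝ) ∂P = P U := by
    have : ∀ ω, (U.indicator (1:Ω → ℝ≥0∞) ω) ^ (2:ℝ) = U.indicator 1 ω := by
      intro ω
      by_cases hω : ω ∈ U
      · rw [Set.indicator_of_mem hω]; simp [ENNReal.one_rpow]
      · rw [Set.indicator_of_notMem hω]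
        simp [ENNReal.zero_rpow_of_pos]
    simp only [this]
    exact lintegral_indicator_one hUmeas
  have hz2 : ∫⁻ ω, (Z ω) ^ (2:ℝ) ∂P = ∑ m ∈ F, ∑ n ∈ F, P (A m ∩ A n) := by
    rw [← hZsq]
    refine lintegral_congr fun ω => ?_
    rw [ENNReal.rpow_two, pow_two]
  rw [hind2, hz2] at hCS
  set B : ℝ≥0∞ := ∑ m ∈ F, ∑ n ∈ F, P (A m ∩ A n) with hB
  have hsq : S * S ≤ B * P U := by
    calc S * S ≤ (B ^ (1/(2:ℝ)) * P U ^ (1/(2:ℝ))) * (B ^ (1/(2:ℝ)) * P U ^ (1/(2:ℝ))) :=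
        mul_le_mul' hCS hCS
      _ = (B ^ (1/(2:ℝ)) * B ^ (1/(2:ℝ))) * (P U ^ (1/(2:ℝ)) * P U ^ (1/(2:ℝ))) := by ring
      _ = B * P U := by
        rw [← ENNReal.rpow_add_of_nonneg _ _ (by norm_num) (by norm_num),
          ← ENNReal.rpow_add_of_nonneg _ _ (by norm_num) (by norm_num)]
        norm_num
  by_cases hS0 : S = 0
  · rw [hS0]
    exact zero_le
  have hSfin : S ≠ ∞ := by
    refine (ENNReal.sum_lt_top.mpr fun n _ => ?_).ne
    exact (ENNReal.pow_ne_top (by simp)).lt_top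
  have hmain : S * S ≤ S * ((S + 3) * P U) := by
    calc S * S ≤ B * P U := hsq
      _ ≤ (S * S + 3 * S) * P U := mul_le_mul_left hdouble _
      _ = S * ((S + 3) * P U) := by ring
  exact (ENNReal.mul_le_mul_iff_right hS0 hSfin).mp hmain

lemma exists_finset_sum (γ : ℕ → ℝ) (hγ : ∀ n, 0 < γ n)
    (hdiv : ¬ Summable (fun n => (2 : ℝ) ^ (-γ n))) (N₀ : ℕ) (T : ℝ) :
    ∃ F : Finset ℕ, (∀ n ∈ F, N₀ ≤ n ∧ ⌈γ n⌉₊ ≤ n) ∧ T ≤ ∑ n ∈ F, (2:ℝ) ^ (-γ n) := by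
  classical
  have hfpos : ∀ n, (0:ℝ) < (2:ℝ) ^ (-γ n) := fun n => Real.rpow_pos_of_pos two_pos _
  set g : ℕ → ℝ := fun n => if N₀ ≤ n ∧ ⌈γ n⌉₊ ≤ n then (2:ℝ) ^ (-γ n) else 0 with hg
  have hgnonneg : ∀ n, 0 ≤ g n := fun n => by
    simp only [hg]
    by_cases hc : N₀ ≤ n ∧ ⌈γ n⌉₊ ≤ n
    · rw [if_pos hc]; exact (hfpos n).le
    · rw [if_neg hc]
  have hgdiv : ¬ Summable g := by
    intro hs
    apply hdiv
    have hmaj : Summable (fun n => (if n < N₀ then (2:ℝ) ^ (-γ n) else 0) + (2⁻¹:ℝ) ^ n) := by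
      refine Summable.add ?_ (summable_geometric_of_lt_one (by norm_num) (by norm_num))
      refine summable_of_ne_finset_zero (s := Finset.range N₀) (fun n hn => ?_)
      simp only [Finset.mem_range, not_lt] at hn
      rw [if_neg (by omega)]
    have hsub : Summable (fun n => (2:ℝ) ^ (-γ n) - g n) := by
      refine hmaj.of_nonneg_of_le (fun n => ?_) (fun n => ?_)
      · simp only [hg]
        by_cases hc : N₀ ≤ n ∧ ⌈γ n⌉₊ ≤ n
        · rw [if_pos hc, sub_self]
        · rw [if_neg hc, sub_zero]; exact (hfpos n).le
      · simp only [hg]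
        by_cases hc : N₀ ≤ n ∧ ⌈γ n⌉₊ ≤ n
        · rw [if_pos hc, sub_self]
          positivity
        · rw [if_neg hc, sub_zero]
          by_cases hN : n < N₀
          · rw [if_pos hN]
            have : (0:ℝ) ≤ (2⁻¹:ℝ)^n := by positivity
            linarith
          · rw [if_neg hN]
            have hlt : (n:ℝ) < γ n := by
              have hcc : ¬ ⌈γ n⌉₊ ≤ n := fun h => hc ⟨by omega, h⟩
              exact Nat.lt_ceil.mp (by omega)
            have h1 : (2:ℝ) ^ (-γ n) ≤ (2:ℝ) ^ (-(n:ℝ)) :=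
              Real.rpow_le_rpow_of_exponent_le one_le_two (by linarith)
            have h2 : (2:ℝ) ^ (-(n:ℝ)) = (2⁻¹:ℝ) ^ n := by
              rw [Real.rpow_neg (by norm_num), Real.rpow_natCast, ← inv_pow]
            have : (0:ℝ) ≤ 0 := le_rfl
            rw [h2] at h1
            linarith
    have heq : (fun n => (2:ℝ) ^ (-γ n)) = fun n => ((2:ℝ) ^ (-γ n) - g n) + g n := by
      funext n; ring
    rw [heq]
    exact hsub.add hs
  have htend := (not_summable_iff_tendsto_nat_atTop_of_nonneg hgnonneg).mp hgdiv
  obtain ⟨m, hm⟩ := (htend.eventually_ge_atTop T).exists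
  refine ⟨(Finset.range m).filter (fun n => N₀ ≤ n ∧ ⌈γ n⌉₊ ≤ n), ?_, ?_⟩
  · intro n hn
    exact (Finset.mem_filter.mp hn).2
  · rw [Finset.sum_filter]
    exact hm

lemma hfpos_aux (γ : ℕ → ℝ) (n : ℕ) : (0:ℝ) ≤ (2:ℝ) ^ (-γ n) :=
  (Real.rpow_pos_of_pos two_pos _).le

/-- the good event: some `n` between `N₀` and `∞` carries an alternating block
  witnessing `M_n ≥ γ n - 1`. -/
def GoodSet (X : ℕ → Ω → Bool) (γ : ℕ → ℝ) (N₀ : ℕ) : Set Ω :=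
  ⋃ n ∈ {n : ℕ | N₀ ≤ n ∧ ⌈γ n⌉₊ ≤ n}, AltSet X (n - ⌈γ n⌉₊) (⌈γ n⌉₊ - 1)

lemma goodSet_compl_zero (hmeas : ∀ i, Measurable (X i))
    (hindep : iIndepFun X P)
    (hfair : ∀ i b, P {ω | X i ω = b} = 1 / 2)
    (γ : ℕ → ℝ) (hγ : ∀ n, 0 < γ n)
    (hdiv : ¬ Summable (fun n => (2 : ℝ) ^ (-γ n))) (N₀ : ℕ) :
    P (GoodSet X γ N₀)ᶜ = 0 := by
  classical
  have hGmeas : MeasurableSet (GoodSet X γ N₀) :=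
    MeasurableSet.biUnion (Set.to_countable _) (fun n _ => measurable_altSet hmeas _ _)
  have key : ∀ j : ℕ, P (GoodSet X γ N₀)ᶜ ≤ 3 / ((j:ℝ≥0∞) + 1) := by
    intro j
    obtain ⟨F, hFmem, hFsum⟩ := exists_finset_sum γ hγ hdiv N₀ ((j:ℝ) + 1)
    set S : ℝ≥0∞ := ∑ n ∈ F, (2⁻¹:ℝ≥0∞) ^ (⌈γ n⌉₊ - 1) with hS
    have hq_ge : ∀ n ∈ F, ENNReal.ofReal ((2:ℝ) ^ (-γ n)) ≤ (2⁻¹:ℝ≥0∞) ^ (⌈γ n⌉₊ - 1) := by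
      intro n _
      have hceil1 : 1 ≤ ⌈γ n⌉₊ := Nat.ceil_pos.mpr (hγ n)
      have hle : ((⌈γ n⌉₊ - 1 : ℕ) : ℝ) ≤ γ n := by
        have h2 : (⌈γ n⌉₊ : ℝ) < γ n + 1 := Nat.ceil_lt_add_one (hγ n).le
        have h3 : ((⌈γ n⌉₊ - 1 : ℕ) : ℝ) = (⌈γ n⌉₊ : ℝ) - 1 := by
          rw [Nat.cast_sub hceil1]; simp
        linarith
      have h1 : (2:ℝ) ^ (-γ n) ≤ (2⁻¹:ℝ) ^ (⌈γ n⌉₊ - 1 : ℕ) := by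
        calc (2:ℝ) ^ (-γ n) ≤ (2:ℝ) ^ (-(((⌈γ n⌉₊ - 1 : ℕ)):ℝ)) :=
            Real.rpow_le_rpow_of_exponent_le one_le_two (by linarith)
          _ = (2⁻¹:ℝ) ^ (⌈γ n⌉₊ - 1 : ℕ) := by
            rw [Real.rpow_neg (by norm_num), Real.rpow_natCast, ← inv_pow]
      calc ENNReal.ofReal ((2:ℝ) ^ (-γ n)) ≤ ENNReal.ofReal ((2⁻¹:ℝ) ^ (⌈γ n⌉₊ - 1 : ℕ)) :=
          ENNReal.ofReal_le_ofReal h1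
        _ = (2⁻¹:ℝ≥0∞) ^ (⌈γ n⌉₊ - 1) := by
          rw [ENNReal.ofReal_pow (by norm_num)]
          congr 1
          rw [ENNReal.ofReal_inv_of_pos (by norm_num)]
          norm_num
    have hjS : ((j:ℝ≥0∞) + 1) ≤ S := by
      have e1 : ((j:ℝ≥0∞) + 1) = ENNReal.ofReal ((j:ℝ) + 1) := by
        rw [ENNReal.ofReal_add (Nat.cast_nonneg j) zero_le_one, ENNReal.ofReal_natCast,
          ENNReal.ofReal_one]
      rw [e1]
      calc ENNReal.ofReal ((j:ℝ) + 1)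
          ≤ ENNReal.ofReal (∑ n ∈ F, (2:ℝ) ^ (-γ n)) := ENNReal.ofReal_le_ofReal hFsum
        _ = ∑ n ∈ F, ENNReal.ofReal ((2:ℝ) ^ (-γ n)) :=
          ENNReal.ofReal_sum_of_nonneg (fun n _ => (hfpos_aux γ n))
        _ ≤ S := Finset.sum_le_sum hq_ge
    have hkey := key_ineq hmeas hindep hfair γ hγ F (fun n hn => (hFmem n hn).2)
    set U : Set Ω := ⋃ n ∈ F, AltSet X (n - ⌈γ n⌉₊) (⌈γ n⌉₊ - 1) with hU
    have hUmeas : MeasurableSet U := MeasurableSet.biUnion (Finset.countable_toSet F)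
      (fun n _ => measurable_altSet hmeas _ _)
    have hSfin : S ≠ ∞ :=
      (ENNReal.sum_lt_top.mpr fun n _ => (ENNReal.pow_ne_top (by simp)).lt_top).ne
    have hS3ne : (S + 3) ≠ 0 := by simp
    have hS3fin : (S + 3) ≠ ∞ := by
      rw [ENNReal.add_ne_top]
      exact ⟨hSfin, by norm_num⟩
    have hPU : S / (S + 3) ≤ P U := by
      rw [ENNReal.div_le_iff_le_mul (Or.inl hS3ne) (Or.inl hS3fin)]
      calc S ≤ (S + 3) * P U := hkey
        _ = P U * (S + 3) := mul_comm _ _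
    have hUsub : U ⊆ GoodSet X γ N₀ := by
      intro ω hω
      rw [hU, Set.mem_iUnion₂] at hω
      obtain ⟨n, hn, hmem⟩ := hω
      rw [GoodSet, Set.mem_iUnion₂]
      exact ⟨n, hFmem n hn, hmem⟩
    calc P (GoodSet X γ N₀)ᶜ ≤ P Uᶜ := measure_mono (Set.compl_subset_compl.mpr hUsub)
      _ = 1 - P U := prob_compl_eq_one_sub hUmeas
      _ ≤ 1 - S / (S + 3) := tsub_le_tsub_left hPU 1
      _ ≤ 3 / (S + 3) := by
          rw [tsub_le_iff_right, ENNReal.div_add_div_same, add_comm (3:ℝ≥0∞) S,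
            ENNReal.div_self hS3ne hS3fin]
      _ ≤ 3 / ((j:ℝ≥0∞) + 1) := by
          apply ENNReal.div_le_div_left
          exact le_trans hjS le_self_add
  by_contra hne
  set x : ℝ≥0∞ := P (GoodSet X γ N₀)ᶜ with hx
  have hxfin : x ≠ ∞ := (lt_of_le_of_lt prob_le_one ENNReal.one_lt_top).ne
  obtain ⟨j, hj⟩ := ENNReal.exists_nat_gt (show 3 / x ≠ ∞ from (ENNReal.div_lt_top (by norm_num) hne).ne)
  have hj1 : 3 / x < (j:ℝ≥0∞) + 1 := lt_of_lt_of_le hj le_self_add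
  have h2 : (3:ℝ≥0∞) < ((j:ℝ≥0∞) + 1) * x := by
    rw [ENNReal.div_lt_iff (Or.inl hne) (Or.inl hxfin)] at hj1
    exact hj1
  have h3 : 3 / ((j:ℝ≥0∞) + 1) < x := by
    rw [ENNReal.div_lt_iff (Or.inl (by simp)) (Or.inl (by simp))]
    rw [mul_comm]
    exact h2
  exact absurd (key j) (not_le.mpr h3)

end LSAux

/-- If `(γ_n)` are positive reals with `∑ 2^(−γ_n) = ∞`, then almost surely there are
infinitely many `N` with `M_N ≥ γ_N − 1`. -/
theorem longestSwitch_ge_gamma_infinitely_often {Ω : Type*} [MeasurableSpace Ω] (P : Measure Ω) [IsProbabilityMeasure P]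
    (X : ℕ → Ω → Bool) (hmeas : ∀ i, Measurable (X i))
    (hindep : iIndepFun X P)
    (hfair : ∀ i b, P {ω | X i ω = b} = 1 / 2)
    (γ : ℕ → ℝ) (hγ : ∀ n, 0 < γ n)
    (hdiv : ¬ Summable (fun n => (2 : ℝ) ^ (-γ n))) :
    ∀ᵐ ω ∂P, ∃ᶠ N : ℕ in atTop, γ N - 1 ≤ (longestSwitch X N ω : ℝ) := by
  classical
  have hae : ∀ N₀ : ℕ, ∀ᵐ ω ∂P, ω ∈ LSAux.GoodSet X γ N₀ := by
    intro N₀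
    rw [MeasureTheory.ae_iff]
    exact LSAux.goodSet_compl_zero hmeas hindep hfair γ hγ hdiv N₀
  have hall : ∀ᵐ ω ∂P, ∀ N₀ : ℕ, ω ∈ LSAux.GoodSet X γ N₀ := (MeasureTheory.ae_all_iff).mpr hae
  filter_upwards [hall] with ω hω
  rw [frequently_atTop]
  intro N₀
  have h := hω N₀
  rw [LSAux.GoodSet, Set.mem_iUnion₂] at h
  obtain ⟨n, ⟨hn1, hn2⟩, hmem⟩ := h
  refine ⟨n, hn1, ?_⟩
  have hceil1 : 1 ≤ ⌈γ n⌉₊ := Nat.ceil_pos.mpr (hγ n)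
  have hkmem : (⌈γ n⌉₊ - 1) ∈ {k | ∃ m, 0 ≤ m ∧ m + k + 1 ≤ 0 + n ∧ AltBlock X ω m k} :=
    ⟨n - ⌈γ n⌉₊, Nat.zero_le _, by omega, hmem⟩
  have hbdd : BddAbove {k | ∃ m, 0 ≤ m ∧ m + k + 1 ≤ 0 + n ∧ AltBlock X ω m k} := by
    refine ⟨n, fun k hk => ?_⟩
    obtain ⟨m, _, h2, _⟩ := hk
    omega
  have hle : ⌈γ n⌉₊ - 1 ≤ longestSwitch X n ω := le_csSup hbdd hkmem
  have hcast : ((⌈γ n⌉₊ - 1 : ℕ) : ℝ) = (⌈γ n⌉₊ : ℝ) - 1 := by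
    rw [Nat.cast_sub hceil1]; simp
  have hstep : γ n - 1 ≤ ((⌈γ n⌉₊ - 1 : ℕ) : ℝ) := by
    rw [hcast]
    have := Nat.le_ceil (γ n)
    linarith
  calc γ n - 1 ≤ ((⌈γ n⌉₊ - 1 : ℕ) : ℝ) := hstep
    _ ≤ (longestSwitch X n ω : ℝ) := Nat.cast_le.mpr hle
end

section
/- Let K ≥ 2 and N ≥ 2K be integers. Then P(M_N < K−1) ≤ (1 − (K+1)/2^K)^{[½[N/K]]}, where [x] denotes the integer part of x. In words: the probability that the first N fair coin tosses contain no alternating block of K consecutive tosses is at most (1 − (K+1)/2^K)^{[½[N/K]]}. -/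
open MeasureTheory ProbabilityTheory Filter

open scoped ENNReal



namespace CoinAux

set_option linter.unusedSectionVars false

def pat (c : Bool) (j : ℕ) : Bool := if j % 2 = 0 then c else !c

lemma pat_zero (c : Bool) : pat c 0 = c := rfl

lemma pat_succ_ne (c : Bool) (j : ℕ) : pat c j ≠ pat c (j + 1) := by
  unfold pat
  rcases Nat.mod_two_eq_zero_or_one j with h | h <;> simp [h, Nat.add_mod, Bool.eq_not_self]

def supp (K b r : ℕ) : Finset ℕ := Finset.Icc (2*K*b + (r-1)) (2*K*b + r + K - 1)

lemma supp_card {K r : ℕ} (hK : 1 ≤ K) (b : ℕ) :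
    (supp K b r).card = if r = 0 then K else K + 1 := by
  rw [supp, Nat.card_Icc]
  split_ifs with h <;> omega

lemma supp_subset_range {K b B r : ℕ} (hr : r < K) (hb : b < B) :
    supp K b r ⊆ Finset.range (2*K*B) := by
  intro i hi
  rw [Finset.mem_range]
  rw [supp, Finset.mem_Icc] at hi
  have h1 : 2*K*(b+1) ≤ 2*K*B := Nat.mul_le_mul_left _ hb
  rw [Nat.mul_succ] at h1
  omega

lemma supp_subset_Icc {K b r : ℕ} (hr : r < K) :
    supp K b r ⊆ Finset.Icc (2*K*b) (2*K*b + (2*K - 1)) :=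
  Finset.Icc_subset_Icc (by omega) (by omega)

variable {Ω : Type*} [MeasurableSpace Ω] (X : ℕ → Ω → Bool)

def atom (K b r : ℕ) (c : Bool) : Set Ω :=
  ⋂ i ∈ supp K b r, X i ⁻¹' {pat c (i - (2*K*b + r))}

lemma mem_atom {K b r : ℕ} {c : Bool} {ω : Ω} :
    ω ∈ atom X K b r c ↔ ∀ i ∈ supp K b r, X i ω = pat c (i - (2*K*b + r)) := by
  simp [atom]

lemma atom_val {K b r : ℕ} {c : Bool} {ω : Ω} (hω : ω ∈ atom X K b r c)
    {i : ℕ} (h1 : 2*K*b + (r-1) ≤ i) (h2 : i ≤ 2*K*b + r + K - 1) :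
    X i ω = pat c (i - (2*K*b + r)) :=
  (mem_atom X).1 hω i (Finset.mem_Icc.2 ⟨h1, h2⟩)

lemma atom_alt {K b r : ℕ} {c : Bool} {ω : Ω} (hω : ω ∈ atom X K b r c)
    {i : ℕ} (h1 : 2*K*b + r ≤ i) (h2 : i + 1 ≤ 2*K*b + r + K - 1) :
    X i ω ≠ X (i+1) ω := by
  have e1 := atom_val X hω (i := i) (by omega) (by omega)
  have e2 := atom_val X hω (i := i+1) (by omega) (by omega)
  have h3 : (i + 1) - (2*K*b + r) = (i - (2*K*b + r)) + 1 := by omega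
  rw [e1, e2, h3]
  exact pat_succ_ne c _

lemma atom_val0 {K b r : ℕ} {c : Bool} {ω : Ω} (hK : 1 ≤ K) (hω : ω ∈ atom X K b r c) :
    X (2*K*b + r) ω = c := by
  have := atom_val X hω (i := 2*K*b + r) (by omega) (by omega)
  simpa [pat_zero] using this

lemma atom_eq_prev {K b r : ℕ} {c : Bool} {ω : Ω} (hr : 1 ≤ r) (hK : 1 ≤ K)
    (hω : ω ∈ atom X K b r c) :
    X (2*K*b + (r-1)) ω = X (2*K*b + r) ω := by
  have e1 := atom_val X hω (i := 2*K*b + (r-1)) (by omega) (by omega)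
  have e2 := atom_val X hω (i := 2*K*b + r) (by omega) (by omega)
  have h0 : (2*K*b + (r-1)) - (2*K*b + r) = 0 := by omega
  have h0' : (2*K*b + r) - (2*K*b + r) = 0 := by omega
  rw [e1, e2, h0, h0']

lemma atom_disjoint {K b : ℕ} (hK : 1 ≤ K) {r r' : ℕ} {c c' : Bool}
    (hr : r < K) (hr' : r' < K) (hne : (r, c) ≠ (r', c')) :
    Disjoint (atom X K b r c) (atom X K b r' c') := by
  rw [Set.disjoint_left]
  intro ω hω hω'
  rcases Nat.lt_trichotomy r r' with hlt | heq | hgt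
  · have h1 := atom_eq_prev X (by omega) hK hω'
    have h2 := atom_alt X hω (i := 2*K*b + (r'-1)) (by omega) (by omega)
    have h3 : 2*K*b + (r'-1) + 1 = 2*K*b + r' := by omega
    rw [h3] at h2
    exact h2 h1
  · subst heq
    have hcc : c ≠ c' := by simpa using hne
    have h1 := atom_val0 X hK hω
    have h2 := atom_val0 X hK hω'
    exact hcc (h1 ▸ h2 ▸ rfl)
  · have h1 := atom_eq_prev X (by omega) hK hω
    have h2 := atom_alt X hω' (i := 2*K*b + (r-1)) (by omega) (by omega)
    have h3 : 2*K*b + (r-1) + 1 = 2*K*b + r := by omega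
    rw [h3] at h2
    exact (h2 h1).elim

def blockEv (K b : ℕ) : Set Ω :=
  ⋃ p ∈ (Finset.range K) ×ˢ (Finset.univ : Finset Bool), atom X K b p.1 p.2

lemma meas_pre_comap (W : Finset ℕ) {i : ℕ} (hi : i ∈ W) (v : Bool) :
    MeasurableSet[MeasurableSpace.comap (fun a (j : W) => X j a) MeasurableSpace.pi]
      (X i ⁻¹' {v}) :=
  ⟨(fun y : W → Bool => y ⟨i, hi⟩) ⁻¹' {v},
    (measurable_pi_apply _) (measurableSet_singleton v), rfl⟩

lemma blockEv_meas_comap {K b : ℕ} (W : Finset ℕ) (hsub : ∀ r < K, supp K b r ⊆ W) :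
    MeasurableSet[MeasurableSpace.comap (fun a (j : W) => X j a) MeasurableSpace.pi]
      (blockEv X K b) := by
  apply @Finset.measurableSet_biUnion _ _ (MeasurableSpace.comap _ _)
  rintro ⟨r, c⟩ hp
  rw [Finset.mem_product, Finset.mem_range] at hp
  apply @Finset.measurableSet_biInter _ _ (MeasurableSpace.comap _ _)
  intro i hi
  exact meas_pre_comap X W (hsub r hp.1 hi) _

lemma atom_measurable (hmeas : ∀ i, Measurable (X i)) (K b r : ℕ) (c : Bool) :
    MeasurableSet (atom X K b r c) :=
  Finset.measurableSet_biInter _ fun i _ => (hmeas i) (measurableSet_singleton _)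

lemma blockEv_measurable (hmeas : ∀ i, Measurable (X i)) (K b : ℕ) :
    MeasurableSet (blockEv X K b) :=
  Finset.measurableSet_biUnion _ fun p _ => atom_measurable X hmeas K b p.1 p.2

variable (P : Measure Ω) [IsProbabilityMeasure P]

lemma atom_prob (hindep : iIndepFun X P)
    (hfair : ∀ i v, P {ω | X i ω = v} = 1 / 2) (K b r : ℕ) (c : Bool) :
    P (atom X K b r c) = 2⁻¹ ^ (supp K b r).card := by
  rw [atom, hindep.meas_biInter (fun i _ => ⟨{pat c (i - (2*K*b + r))},
    measurableSet_singleton _, rfl⟩)]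
  rw [Finset.prod_congr rfl (fun i _ => show P (X i ⁻¹' {pat c (i - (2*K*b + r))}) = 2⁻¹ by
    rw [show X i ⁻¹' {pat c (i - (2*K*b + r))} = {ω | X i ω = pat c (i - (2*K*b + r))} from rfl,
      hfair]
    rw [one_div] )]
  rw [Finset.prod_const]

lemma blockEv_prob (hindep : iIndepFun X P)
    (hmeas : ∀ i, Measurable (X i))
    (hfair : ∀ i v, P {ω | X i ω = v} = 1 / 2) {K : ℕ} (hK : 1 ≤ K) (b : ℕ) :
    P (blockEv X K b) = (K + 1 : ℝ≥0∞) * 2⁻¹ ^ K := by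
  have hd : Set.PairwiseDisjoint
      ↑((Finset.range K) ×ˢ (Finset.univ : Finset Bool))
      (fun p : ℕ × Bool => atom X K b p.1 p.2) := by
    rintro ⟨r, c⟩ hp ⟨r', c'⟩ hq hpq
    rw [Finset.mem_coe, Finset.mem_product, Finset.mem_range] at hp hq
    exact atom_disjoint X hK hp.1 hq.1 hpq
  have hm : ∀ p ∈ (Finset.range K) ×ˢ (Finset.univ : Finset Bool),
      MeasurableSet (atom X K b p.1 p.2) := fun p _ => atom_measurable X hmeas K b p.1 p.2
  rw [blockEv, measure_biUnion_finset hd hm]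
  rw [Finset.sum_congr rfl (fun p _ => atom_prob X P hindep hfair K b p.1 p.2)]
  rw [Finset.sum_product]
  have hterm : ∀ r ∈ Finset.range K,
      (∑ c : Bool, (2⁻¹ : ℝ≥0∞) ^ (supp K b r).card)
        = 2⁻¹ ^ K + (if r = 0 then (2⁻¹ : ℝ≥0∞) ^ K else 0) := by
    intro r _
    rw [Fintype.sum_bool, supp_card hK b]
    have h2 : (2⁻¹ : ℝ≥0∞) ^ (K + 1) + 2⁻¹ ^ (K + 1) = 2⁻¹ ^ K := by
      rw [← two_mul, pow_succ, ← mul_assoc, mul_comm (2 : ℝ≥0∞), mul_assoc,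
        ENNReal.mul_inv_cancel two_ne_zero ENNReal.ofNat_ne_top, mul_one]
    split_ifs with h
    · rfl
    · rw [h2]; exact (add_zero _).symm
  rw [Finset.sum_congr rfl hterm, Finset.sum_add_distrib, Finset.sum_const,
    Finset.card_range, Finset.sum_ite_eq' (Finset.range K) 0 (fun _ => (2⁻¹ : ℝ≥0∞) ^ K),
    if_pos (Finset.mem_range.2 (by omega)), nsmul_eq_mul, add_mul, one_mul]

lemma inter_compl_prob (hindep : iIndepFun X P)
    (hmeas : ∀ i, Measurable (X i)) {K : ℕ} (hK : 1 ≤ K) (B : ℕ) :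
    P (⋂ b ∈ Finset.range B, (blockEv X K b)ᶜ)
      = ∏ b ∈ Finset.range B, P ((blockEv X K b)ᶜ) := by
  induction B with
  | zero => simp
  | succ n ih =>
    rw [Finset.range_add_one, Finset.set_biInter_insert,
      Finset.prod_insert Finset.notMem_range_self]
    have hST : Disjoint (Finset.Icc (2*K*n) (2*K*n + (2*K-1))) (Finset.range (2*K*n)) := by
      rw [Finset.disjoint_left]
      intro i hi hir
      rw [Finset.mem_Icc] at hi
      rw [Finset.mem_range] at hir
      omega
    have hfun := hindep.indepFun_finset _ _ hST hmeas
    rw [IndepFun_iff_Indep] at hfun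
    rw [Indep_iff] at hfun
    have h1 : MeasurableSet[MeasurableSpace.comap
        (fun a (j : (Finset.Icc (2*K*n) (2*K*n + (2*K-1)) : Finset ℕ)) => X j a)
        MeasurableSpace.pi] (blockEv X K n)ᶜ :=
      (blockEv_meas_comap X _ (fun r hr => supp_subset_Icc hr)).compl
    have h2 : MeasurableSet[MeasurableSpace.comap
        (fun a (j : (Finset.range (2*K*n) : Finset ℕ)) => X j a)
        MeasurableSpace.pi] (⋂ b ∈ Finset.range n, (blockEv X K b)ᶜ) := by
      apply @Finset.measurableSet_biInter _ _ (MeasurableSpace.comap _ _)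
      intro b hb
      exact (blockEv_meas_comap X _
        (fun r hr => supp_subset_range hr (Finset.mem_range.1 hb))).compl
    rw [hfun _ _ h1 h2, ih]

end CoinAux


/-- For `K ≥ 2` and `N ≥ 2K`,
`P(M_N < K − 1) ≤ (1 − (K+1)/2^K)^([½[N/K]])`. -/
theorem prob_longestSwitch_lt_upper_bound {Ω : Type*} [MeasurableSpace Ω] (P : Measure Ω) [IsProbabilityMeasure P]
    (X : ℕ → Ω → Bool) (hmeas : ∀ i, Measurable (X i))
    (hindep : iIndepFun X P)
    (hfair : ∀ i b, P {ω | X i ω = b} = 1 / 2)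
    (K N : ℕ) (hK : 2 ≤ K) (hN : 2 * K ≤ N) :
    (P {ω | longestSwitch X N ω < K - 1}).toReal ≤
      (1 - (K + 1 : ℝ) / 2 ^ K) ^ (N / K / 2) := by
  classical
  set B := N / K / 2 with hB
  have hK1 : 1 ≤ K := by omega
  have hKB_le_N : 2*K*B ≤ N := by
    have h1 : (N/K/2)*2 ≤ N/K := Nat.div_mul_le_self _ 2
    have h2 : (N/K)*K ≤ N := Nat.div_mul_le_self _ K
    calc 2*K*B = ((N/K/2)*2)*K := by rw [hB]; ring
      _ ≤ (N/K)*K := Nat.mul_le_mul_right K h1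
      _ ≤ N := h2
  have hincl : {ω | longestSwitch X N ω < K - 1}
      ⊆ ⋂ b ∈ Finset.range B, (CoinAux.blockEv X K b)ᶜ := by
    intro ω hω
    simp only [Set.mem_iInter, Set.mem_compl_iff, Finset.mem_range]
    intro b hb hmem
    obtain ⟨⟨r, c⟩, hp, hatom⟩ := Set.mem_iUnion₂.mp hmem
    rw [Finset.mem_product, Finset.mem_range] at hp
    have hrK : r < K := hp.1
    have halt : AltBlock X ω (2*K*b + r) (K-1) := fun i hi1 hi2 =>
      CoinAux.atom_alt X hatom (by omega) (by omega)
    have hmul : 2*K*(b+1) ≤ 2*K*B := Nat.mul_le_mul_left _ hb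
    rw [Nat.mul_succ] at hmul
    have hmemset : (K-1) ∈ {k | ∃ m, 0 ≤ m ∧ m + k + 1 ≤ 0 + N ∧ AltBlock X ω m k} :=
      ⟨2*K*b + r, Nat.zero_le _, by omega, halt⟩
    have hbdd : BddAbove {k | ∃ m, 0 ≤ m ∧ m + k + 1 ≤ 0 + N ∧ AltBlock X ω m k} :=
      ⟨N, fun k hk => by obtain ⟨m, _, h2, _⟩ := hk; omega⟩
    have hge : K - 1 ≤ longestSwitch X N ω := le_csSup hbdd hmemset
    rw [Set.mem_setOf_eq] at hω
    omega
  have key := CoinAux.inter_compl_prob X P hindep hmeas hK1 B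
  have hle1 : ((K : ℝ≥0∞) + 1) * 2⁻¹ ^ K ≤ 1 := by
    have hKlt : ((K : ℝ≥0∞) + 1) ≤ 2 ^ K := by
      have : (K + 1 : ℕ) ≤ 2 ^ K := Nat.lt_two_pow_self
      calc ((K : ℝ≥0∞) + 1) = ((K + 1 : ℕ) : ℝ≥0∞) := by push_cast; ring
        _ ≤ ((2 ^ K : ℕ) : ℝ≥0∞) := by exact_mod_cast this
        _ = 2 ^ K := by push_cast; ring
    calc ((K : ℝ≥0∞) + 1) * 2⁻¹ ^ K ≤ 2 ^ K * 2⁻¹ ^ K :=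
          mul_le_mul_left hKlt _
      _ = 1 := by
          rw [← mul_pow, ENNReal.mul_inv_cancel two_ne_zero ENNReal.ofNat_ne_top, one_pow]
  have hfactor : ∀ b : ℕ, P ((CoinAux.blockEv X K b)ᶜ)
      = 1 - ((K : ℝ≥0∞) + 1) * 2⁻¹ ^ K := fun b => by
    rw [prob_compl_eq_one_sub (CoinAux.blockEv_measurable X hmeas K b),
      CoinAux.blockEv_prob X P hindep hmeas hfair hK1 b]
  have hfac : ∀ b : ℕ, (P ((CoinAux.blockEv X K b)ᶜ)).toReal
      = 1 - (K + 1 : ℝ) / 2 ^ K := fun b => by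
    rw [hfactor b, ENNReal.toReal_sub_of_le hle1 ENNReal.one_ne_top]
    simp [ENNReal.toReal_mul, ENNReal.toReal_pow, div_eq_mul_inv, inv_pow,
      ENNReal.toReal_add, ENNReal.natCast_ne_top, ENNReal.one_ne_top]
  calc (P {ω | longestSwitch X N ω < K - 1}).toReal
      ≤ (P (⋂ b ∈ Finset.range B, (CoinAux.blockEv X K b)ᶜ)).toReal :=
        ENNReal.toReal_mono (measure_ne_top P _) (measure_mono hincl)
    _ = (∏ b ∈ Finset.range B, P ((CoinAux.blockEv X K b)ᶜ)).toReal := by rw [key]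
    _ = ∏ b ∈ Finset.range B, (P ((CoinAux.blockEv X K b)ᶜ)).toReal := ENNReal.toReal_prod _ _
    _ = (1 - (K + 1 : ℝ) / 2 ^ K) ^ B := by
        rw [Finset.prod_congr rfl (fun b _ => hfac b), Finset.prod_const, Finset.card_range]
end

section
/- Let N ≥ 1 and m ≥ 1 be integers. Then (N+1)/2^N ≤ P(M_{2N}^{(m)} ≥ N−1) ≤ (N+2)/2^N, where M_{2N}^{(m)} ≥ N−1 is the event that some block of N consecutive tosses within X_m, …, X_{m+2N−1} is alternating. -/
open MeasureTheory ProbabilityTheory Filter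

/-! ### Auxiliary definitions and lemmas -/

/-- The alternating pattern starting with `b`. -/
def altpat (b : Bool) (u : ℕ) : Bool := xor b (decide (u % 2 = 1))

lemma altpat_zero (b : Bool) : altpat b 0 = b := by simp [altpat]

lemma altpat_succ (b : Bool) (u : ℕ) : altpat b (u + 1) = !(altpat b u) := by
  rcases Nat.mod_two_eq_zero_or_one u with h0 | h0 <;>
    simp [altpat, Nat.add_mod, h0]

lemma altpat_ne_not (b : Bool) (u : ℕ) : altpat b u ≠ altpat b (u+1) := by
  rw [altpat_succ]; cases altpat b u <;> simp

/-- The pattern `b, b, !b, b, !b, …` (a copy of `b` followed by the alternating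
pattern starting with `b`). -/
def bpat (b : Bool) : ℕ → Bool
  | 0 => b
  | u + 1 => altpat b u

/-- The event that `X a, …, X (a + n - 1)` follows the pattern `g`. -/
def patSet {Ω : Type*} (X : ℕ → Ω → Bool) (a n : ℕ) (g : ℕ → Bool) : Set Ω :=
  ⋂ u ∈ Finset.range n, {ω | X (a + u) ω = g u}

lemma mem_patSet {Ω : Type*} {X : ℕ → Ω → Bool} {a n : ℕ} {g : ℕ → Bool} {ω : Ω} :
    ω ∈ patSet X a n g ↔ ∀ u < n, X (a + u) ω = g u := by
  simp [patSet]

lemma measurableSet_patSet {Ω : Type*} [MeasurableSpace Ω] {X : ℕ → Ω → Bool}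
    (hmeas : ∀ i, Measurable (X i)) (a n : ℕ) (g : ℕ → Bool) :
    MeasurableSet (patSet X a n g) :=
  Finset.measurableSet_biInter _ fun u _ => (hmeas (a + u)) (measurableSet_singleton (g u))

lemma meas_patSet {Ω : Type*} [MeasurableSpace Ω] {P : Measure Ω}
    {X : ℕ → Ω → Bool}
    (hindep : iIndepFun X P)
    (hfair : ∀ i b, P {ω | X i ω = b} = 1 / 2)
    (a n : ℕ) (g : ℕ → Bool) :
    P (patSet X a n g) = (1 / 2 : ENNReal) ^ n := by
  have hT : patSet X a n g
      = ⋂ i ∈ (Finset.range n).image (a + ·), X i ⁻¹' {g (i - a)} := by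
    ext ω
    simp only [patSet, Set.mem_iInter, Finset.mem_image, Finset.mem_range, Set.mem_setOf_eq,
      Set.mem_preimage, Set.mem_singleton_iff]
    constructor
    · rintro h i ⟨u, hu, rfl⟩
      simpa [Nat.add_sub_cancel_left] using h u hu
    · intro h u hu
      simpa [Nat.add_sub_cancel_left] using h (a + u) ⟨u, hu, rfl⟩
  rw [hT, hindep.meas_biInter (fun i _ => ⟨{g (i - a)}, measurableSet_singleton _, rfl⟩)]
  have hf : ∀ i ∈ (Finset.range n).image (a + ·), P (X i ⁻¹' {g (i - a)}) = 1 / 2 :=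
    fun i _ => hfair i (g (i - a))
  rw [Finset.prod_congr rfl hf, Finset.prod_const,
    Finset.card_image_of_injective _ (fun x y h => by omega), Finset.card_range]

lemma altBlock_iff_pat {Ω : Type*} {X : ℕ → Ω → Bool} {ω : Ω} {a n : ℕ} (hn : 1 ≤ n) :
    AltBlock X ω a (n - 1) ↔ ∀ u < n, X (a + u) ω = altpat (X a ω) u := by
  constructor
  · intro h u hu
    induction u with
    | zero => simp [altpat_zero]
    | succ v ih =>
      have hv : X (a + v) ω = altpat (X a ω) v := ih (by omega)
      have hne := h (a + v) (by omega) (by omega)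
      rw [altpat_succ, ← hv]
      have : a + v + 1 = a + (v + 1) := by omega
      rw [this] at hne
      cases hx : X (a + (v + 1)) ω <;> cases hy : X (a + v) ω <;> simp_all
  · intro h i hi1 hi2
    have hu : i = a + (i - a) := by omega
    have h1 := h (i - a) (by omega)
    have h2 := h (i - a + 1) (by omega)
    rw [hu, h1]
    have hi1' : a + (i - a) + 1 = a + (i - a + 1) := by omega
    rw [hi1', h2]
    exact altpat_ne_not _ _

lemma altBlock_sub {Ω : Type*} {X : ℕ → Ω → Bool} {ω : Ω} {a k k' : ℕ} (hk : k' ≤ k)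
    (h : AltBlock X ω a k) : AltBlock X ω a k' :=
  fun i h1 h2 => h i h1 (by omega)

lemma event_eq {Ω : Type*} {X : ℕ → Ω → Bool} {s N : ℕ} (hN : 1 ≤ N) (ω : Ω) :
    (N - 1 ≤ longestSwitchIn X s (2 * N) ω)
      ↔ ∃ t ≤ N, AltBlock X ω (s + t) (N - 1) := by
  rw [longestSwitchIn]
  set S := {k | ∃ m, s ≤ m ∧ m + k + 1 ≤ s + 2 * N ∧ AltBlock X ω m k} with hS
  have hbdd : BddAbove S := ⟨2 * N, by rintro k ⟨m', h1, h2, -⟩; omega⟩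
  have hne : S.Nonempty := ⟨0, s, le_refl s, by omega, fun i h1 h2 => absurd h2 (by omega)⟩
  constructor
  · intro hle
    obtain ⟨m', h1, h2, hblk⟩ := Nat.sSup_mem hne hbdd
    refine ⟨m' - s, by omega, ?_⟩
    have : s + (m' - s) = m' := by omega
    rw [this]
    exact altBlock_sub (by omega) hblk
  · rintro ⟨t, ht, hblk⟩
    exact le_csSup hbdd ⟨s + t, by omega, by omega, hblk⟩

/-- The event that the block of `N` tosses starting at `s + t` is alternating. -/
def Aev {Ω : Type*} (X : ℕ → Ω → Bool) (s N t : ℕ) : Set Ω :=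
  {ω | AltBlock X ω (s + t) (N - 1)}

/-- The event that the block of `N` tosses starting at `s + t` is alternating and the
preceding toss equals the first toss of the block. -/
def Bev {Ω : Type*} (X : ℕ → Ω → Bool) (s N t : ℕ) : Set Ω :=
  {ω | X (s + t - 1) ω = X (s + t) ω ∧ AltBlock X ω (s + t) (N - 1)}

lemma mem_apat_iff {Ω : Type*} {X : ℕ → Ω → Bool} {a N : ℕ} (hN : 1 ≤ N) (ω : Ω) (b : Bool) :
    ω ∈ patSet X a N (altpat b) ↔ X a ω = b ∧ AltBlock X ω a (N - 1) := by
  rw [mem_patSet, altBlock_iff_pat hN]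
  constructor
  · intro h
    have hb : X a ω = b := by simpa [altpat_zero] using h 0 hN
    exact ⟨hb, fun u hu => by rw [h u hu, hb]⟩
  · rintro ⟨hb, h⟩ u hu
    rw [h u hu, hb]

lemma mem_bpat_iff {Ω : Type*} {X : ℕ → Ω → Bool} {s N t : ℕ} (hN : 1 ≤ N) (ht : 1 ≤ t)
    (ω : Ω) (b : Bool) :
    ω ∈ patSet X (s + t - 1) (N + 1) (bpat b) ↔
      X (s + t) ω = b ∧ X (s + t - 1) ω = X (s + t) ω ∧ AltBlock X ω (s + t) (N - 1) := by
  have ha : ∀ v, s + t - 1 + (v + 1) = s + t + v := fun v => by omega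
  rw [mem_patSet, altBlock_iff_pat hN]
  constructor
  · intro h
    have hb : X (s + t) ω = b := by
      have h1 := h 1 (by omega)
      rw [ha 0, Nat.add_zero] at h1
      simpa [bpat, altpat_zero] using h1
    have h0 : X (s + t - 1) ω = b := by simpa [bpat] using h 0 (by omega)
    refine ⟨hb, by rw [h0, hb], ?_⟩
    intro u hu
    have hh := h (u + 1) (by omega)
    rw [ha u] at hh
    rw [hh, hb]
    rfl
  · rintro ⟨hb, heq, h⟩ u hu
    match u with
    | 0 => simpa [bpat] using heq.trans hb
    | v + 1 =>
      rw [ha v]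
      rw [h v (by omega), hb]
      rfl

lemma Aev_eq {Ω : Type*} {X : ℕ → Ω → Bool} {s N : ℕ} (hN : 1 ≤ N) (t : ℕ) :
    Aev X s N t = patSet X (s + t) N (altpat false) ∪ patSet X (s + t) N (altpat true) := by
  ext ω
  simp only [Aev, Set.mem_setOf_eq, Set.mem_union, mem_apat_iff hN]
  cases hb : X (s + t) ω <;> simp [hb]

lemma Bev_eq {Ω : Type*} {X : ℕ → Ω → Bool} {s N t : ℕ} (hN : 1 ≤ N) (ht : 1 ≤ t) :
    Bev X s N t
      = patSet X (s + t - 1) (N + 1) (bpat false)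
        ∪ patSet X (s + t - 1) (N + 1) (bpat true) := by
  ext ω
  simp only [Bev, Set.mem_setOf_eq, Set.mem_union, mem_bpat_iff hN ht]
  cases hb : X (s + t) ω <;> simp [hb]

lemma meas_Aev {Ω : Type*} [MeasurableSpace Ω] {P : Measure Ω} {X : ℕ → Ω → Bool}
    (hmeas : ∀ i, Measurable (X i))
    (hindep : iIndepFun X P)
    (hfair : ∀ i b, P {ω | X i ω = b} = 1 / 2)
    {N : ℕ} (hN : 1 ≤ N) (s t : ℕ) :
    P (Aev X s N t) = 2 * (1 / 2 : ENNReal) ^ N := by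
  have hdisj : Disjoint (patSet X (s + t) N (altpat false)) (patSet X (s + t) N (altpat true)) := by
    rw [Set.disjoint_left]
    intro ω h1 h2
    rw [mem_apat_iff hN] at h1 h2
    rw [h1.1] at h2
    exact absurd h2.1 (by simp)
  rw [Aev_eq hN, measure_union hdisj (measurableSet_patSet hmeas _ _ _),
    meas_patSet hindep hfair, meas_patSet hindep hfair, two_mul]

lemma meas_Bev {Ω : Type*} [MeasurableSpace Ω] {P : Measure Ω} {X : ℕ → Ω → Bool}
    (hmeas : ∀ i, Measurable (X i))
    (hindep : iIndepFun X P)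
    (hfair : ∀ i b, P {ω | X i ω = b} = 1 / 2)
    {N t : ℕ} (hN : 1 ≤ N) (ht : 1 ≤ t) (s : ℕ) :
    P (Bev X s N t) = 2 * (1 / 2 : ENNReal) ^ (N + 1) := by
  have hdisj : Disjoint (patSet X (s + t - 1) (N + 1) (bpat false))
      (patSet X (s + t - 1) (N + 1) (bpat true)) := by
    rw [Set.disjoint_left]
    intro ω h1 h2
    rw [mem_bpat_iff hN ht] at h1 h2
    rw [h1.1] at h2
    exact absurd h2.1 (by simp)
  rw [Bev_eq hN ht, measure_union hdisj (measurableSet_patSet hmeas _ _ _),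
    meas_patSet hindep hfair, meas_patSet hindep hfair, two_mul]

/-- For `N ≥ 1` and `m ≥ 1` (1-based start `m`, i.e. 0-based start `m - 1`),
`(N+1)/2^N ≤ P(M_{2N}^{(m)} ≥ N − 1) ≤ (N+2)/2^N`, where the event is that some block
of `N` consecutive tosses within `X_m, …, X_{m+2N−1}` is alternating. -/
theorem prob_window_longestSwitch_ge {Ω : Type*} [MeasurableSpace Ω] (P : Measure Ω) [IsProbabilityMeasure P]
    (X : ℕ → Ω → Bool) (hmeas : ∀ i, Measurable (X i))
    (hindep : iIndepFun X P)
    (hfair : ∀ i b, P {ω | X i ω = b} = 1 / 2)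
    (N m : ℕ) (hN : 1 ≤ N) (hm : 1 ≤ m) :
    (N + 1 : ℝ) / 2 ^ N ≤
        (P {ω | N - 1 ≤ longestSwitchIn X (m - 1) (2 * N) ω}).toReal ∧
      (P {ω | N - 1 ≤ longestSwitchIn X (m - 1) (2 * N) ω}).toReal ≤ (N + 2 : ℝ) / 2 ^ N := by
  classical
  set s := m - 1 with hs
  set q : ENNReal := (1 / 2) ^ N with hq
  have hq_ne_top : q ≠ ⊤ := by
    rw [hq]; exact ENNReal.pow_ne_top (by simp)
  have hPA : ∀ t, P (Aev X s N t) = 2 * q := fun t => meas_Aev hmeas hindep hfair hN s t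
  have h2q : (2 : ENNReal) * (1 / 2 : ENNReal) ^ (N + 1) = q := by
    rw [hq, pow_succ,
      show (2 : ENNReal) * ((1 / 2) ^ N * (1 / 2)) = ((1 / 2) * 2) * (1 / 2) ^ N by ring,
      one_div, ENNReal.inv_mul_cancel two_ne_zero ENNReal.ofNat_ne_top, one_mul]
  have hPB : ∀ t, 1 ≤ t → P (Bev X s N t) = q := fun t ht => by
    rw [meas_Bev hmeas hindep hfair hN ht s, h2q]
  -- event identity
  have hev : {ω | N - 1 ≤ longestSwitchIn X s (2 * N) ω}
      = ⋃ t ∈ Finset.range (N + 1), Aev X s N t := by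
    ext ω
    simp only [Set.mem_setOf_eq, Set.mem_iUnion, Finset.mem_range, Aev]
    rw [event_eq hN]
    constructor
    · rintro ⟨t, h1, h2⟩; exact ⟨t, by omega, h2⟩
    · rintro ⟨t, h1, h2⟩; exact ⟨t, by omega, h2⟩
  -- key: an alternating block starting at `s + t'` forces a switch at `s + t - 1`
  have hkey : ∀ t' t (ω : Ω), t' < t → t < t' + N → AltBlock X ω (s + t') (N - 1) →
      X (s + t - 1) ω ≠ X (s + t) ω := by
    intro t' t ω h1 h2 hblk
    have h3 : s + t - 1 + 1 = s + t := by omega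
    have h4 := hblk (s + t - 1) (by omega) (by omega)
    rwa [h3] at h4
  -- the disjoint family for the lower bound
  set C : ℕ → Set Ω := fun t => if t = 0 then Aev X s N 0 else Bev X s N t with hC
  have hCA : ∀ t, C t ⊆ Aev X s N t := by
    intro t ω hω
    by_cases h0 : t = 0
    · subst h0; simpa [hC] using hω
    · simp only [hC, if_neg h0] at hω; exact hω.2
  have hCmeas : ∀ t ∈ Finset.range N, MeasurableSet (C t) := by
    intro t _
    by_cases h0 : t = 0
    · simp only [hC, if_pos h0, Aev_eq hN]
      exact (measurableSet_patSet hmeas _ _ _).union (measurableSet_patSet hmeas _ _ _)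
    · simp only [hC, if_neg h0, Bev_eq hN (by omega : 1 ≤ t)]
      exact (measurableSet_patSet hmeas _ _ _).union (measurableSet_patSet hmeas _ _ _)
  have hdisjC : ∀ t' t, t' < t → t < N → Disjoint (C t') (C t) := by
    intro t' t h1 h2
    rw [Set.disjoint_left]
    intro ω hω' hω
    have hA' : AltBlock X ω (s + t') (N - 1) := hCA t' hω'
    have hB : X (s + t - 1) ω = X (s + t) ω := by
      have hCt : C t = Bev X s N t := if_neg (by omega)
      rw [hCt] at hω
      exact hω.1
    exact hkey t' t ω h1 (by omega) hA' hB
  have hpair : Set.PairwiseDisjoint (↑(Finset.range N) : Set ℕ) C := by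
    intro a ha b hb hab
    rcases lt_or_gt_of_ne hab with h | h
    · exact hdisjC a b h (by simpa using hb)
    · exact (hdisjC b a h (by simpa using ha)).symm
  -- lower bound in ℝ≥0∞
  have hlow : ((N + 1 : ℕ) : ENNReal) * q ≤ P {ω | N - 1 ≤ longestSwitchIn X s (2 * N) ω} := by
    rw [hev]
    have hsub : (⋃ t ∈ Finset.range N, C t) ⊆ ⋃ t ∈ Finset.range (N + 1), Aev X s N t := by
      intro ω hω
      simp only [Set.mem_iUnion, Finset.mem_range] at hω ⊢
      obtain ⟨t, ht, h⟩ := hω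
      exact ⟨t, by omega, hCA t h⟩
    have hsum : ∑ t ∈ Finset.range N, P (C t) = ((N + 1 : ℕ) : ENNReal) * q := by
      obtain ⟨K, hK⟩ : ∃ K, N = K + 1 := ⟨N - 1, by omega⟩
      rw [hK, Finset.sum_range_succ']
      have h0 : P (C 0) = 2 * q := by
        rw [show C 0 = Aev X s N 0 from if_pos rfl]; exact hPA 0
      have h1 : ∀ t ∈ Finset.range K, P (C (t + 1)) = q := by
        intro t _
        rw [show C (t + 1) = Bev X s N (t + 1) from if_neg (by omega)]
        exact hPB (t + 1) (by omega)
      rw [Finset.sum_congr rfl h1, Finset.sum_const, Finset.card_range, h0, nsmul_eq_mul]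
      push_cast
      ring
    calc ((N + 1 : ℕ) : ENNReal) * q = ∑ t ∈ Finset.range N, P (C t) := hsum.symm
      _ = P (⋃ t ∈ Finset.range N, C t) := (measure_biUnion_finset hpair hCmeas).symm
      _ ≤ P (⋃ t ∈ Finset.range (N + 1), Aev X s N t) := measure_mono hsub
  -- upper bound: covering by first-occurrence events
  have hind : ∀ t, t ≤ N → ∀ ω, AltBlock X ω (s + t) (N - 1) →
      ω ∈ Aev X s N 0 ∪ ⋃ t' ∈ Finset.Icc 1 N, Bev X s N t' := by
    intro t
    induction t with
    | zero => intro _ ω h; exact Set.mem_union_left _ h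
    | succ t ih =>
      intro ht ω h
      by_cases hb : X (s + (t + 1) - 1) ω = X (s + (t + 1)) ω
      · refine Set.mem_union_right _ ?_
        simp only [Set.mem_iUnion, Finset.mem_Icc]
        exact ⟨t + 1, ⟨by omega, ht⟩, hb, h⟩
      · have hb' : X (s + t) ω ≠ X (s + t + 1) ω := by
          have e1 : s + (t + 1) - 1 = s + t := by omega
          have e2 : s + (t + 1) = s + t + 1 := by omega
          rw [e1, e2] at hb
          exact hb
        refine ih (by omega) ω ?_
        intro i hi1 hi2
        rcases eq_or_lt_of_le hi1 with heq | hlt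
        · rw [← heq]; exact hb'
        · exact h i (by omega) (by omega)
  have hup : P {ω | N - 1 ≤ longestSwitchIn X s (2 * N) ω} ≤ ((N + 2 : ℕ) : ENNReal) * q := by
    rw [hev]
    have hsub : (⋃ t ∈ Finset.range (N + 1), Aev X s N t) ⊆
        Aev X s N 0 ∪ ⋃ t' ∈ Finset.Icc 1 N, Bev X s N t' := by
      intro ω hω
      simp only [Set.mem_iUnion, Finset.mem_range] at hω
      obtain ⟨t, ht, h⟩ := hω
      exact hind t (by omega) ω h
    calc P (⋃ t ∈ Finset.range (N + 1), Aev X s N t)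
        ≤ P (Aev X s N 0 ∪ ⋃ t' ∈ Finset.Icc 1 N, Bev X s N t') := measure_mono hsub
      _ ≤ P (Aev X s N 0) + P (⋃ t' ∈ Finset.Icc 1 N, Bev X s N t') := measure_union_le _ _
      _ ≤ P (Aev X s N 0) + ∑ t ∈ Finset.Icc 1 N, P (Bev X s N t) :=
          add_le_add le_rfl (measure_biUnion_finset_le _ _)
      _ = ((N + 2 : ℕ) : ENNReal) * q := by
          rw [hPA 0, Finset.sum_congr rfl (fun t ht => hPB t (Finset.mem_Icc.mp ht).1),
            Finset.sum_const, Nat.card_Icc, nsmul_eq_mul]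
          push_cast
          ring
  -- pass to real numbers
  have hcast : ∀ c : ℕ, (((c : ℕ) : ENNReal) * q).toReal = (c : ℝ) / 2 ^ N := by
    intro c
    rw [hq, ENNReal.toReal_mul, ENNReal.toReal_pow, ENNReal.toReal_natCast, ENNReal.toReal_div]
    norm_num [div_pow]
    rw [div_eq_mul_inv]
  constructor
  · have h := ENNReal.toReal_mono (measure_ne_top P _) hlow
    rw [hcast (N + 1)] at h
    calc (N + 1 : ℝ) / 2 ^ N = ((N + 1 : ℕ) : ℝ) / 2 ^ N := by push_cast; ring
      _ ≤ _ := h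
  · have hfin : ((N + 2 : ℕ) : ENNReal) * q ≠ ⊤ :=
      ENNReal.mul_ne_top (ENNReal.natCast_ne_top _) hq_ne_top
    have h := ENNReal.toReal_mono hfin hup
    rw [hcast (N + 2)] at h
    calc (P {ω | N - 1 ≤ longestSwitchIn X s (2 * N) ω}).toReal ≤ ((N + 2 : ℕ) : ℝ) / 2 ^ N := h
      _ = (N + 2 : ℝ) / 2 ^ N := by push_cast; ring
end

section
/- Let K ≥ 2 and N ≥ 2K be integers, set L = [(N−2K)/K], and for l = 0, 1, …, L let C_l be the event that some block of K consecutive tosses within X_{lK+1}, …, X_{(l+2)K} is alternating. Let D₀ be the union of the C_l over even l ∈ {0,…,L} and D₁ the union of the C_l over odd l ∈ {0,…,L}. Then P(D₀ ∩ D₁) ≥ P(D₀) P(D₁); equivalently, P(D̄₀ ∩ D̄₁) ≥ P(D̄₀) P(D̄₁). -/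
open MeasureTheory ProbabilityTheory Filter
open scoped FinsetFamily

lemma longest_ge_iff {Ω : Type*} (X : ℕ → Ω → Bool) (s N t : ℕ) (hN : 1 ≤ N) (ω : Ω) :
    t ≤ longestSwitchIn X s N ω ↔ ∃ m, s ≤ m ∧ m + t + 1 ≤ s + N ∧ AltBlock X ω m t := by
  have hbdd : BddAbove {k | ∃ m, s ≤ m ∧ m + k + 1 ≤ s + N ∧ AltBlock X ω m k} := by
    refine ⟨N, fun k hk => ?_⟩
    obtain ⟨m, hm, hle, -⟩ := hk
    omega
  constructor
  · intro ht
    rcases Nat.eq_zero_or_pos t with rfl | htpos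
    · exact ⟨s, le_rfl, by omega, fun i h1 h2 => absurd h2 (by omega)⟩
    · have hne : {k | ∃ m, s ≤ m ∧ m + k + 1 ≤ s + N ∧ AltBlock X ω m k}.Nonempty := by
        by_contra hemp
        rw [Set.not_nonempty_iff_eq_empty] at hemp
        rw [longestSwitchIn, hemp] at ht
        simp at ht
        omega
      have hmem := Nat.sSup_mem hne hbdd
      obtain ⟨m, hm, hle, hab⟩ := hmem
      exact ⟨m, hm, by unfold longestSwitchIn at ht; omega,
        fun i h1 h2 => hab i h1 (by unfold longestSwitchIn at ht; omega)⟩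
  · rintro ⟨m, hm, hle, hab⟩
    exact le_csSup hbdd ⟨m, hm, hle, hab⟩

def SwProp (K L : ℕ) (pe : ℕ → Prop) (y : ℕ → Bool) : Prop :=
  ∃ l, l ≤ L ∧ pe l ∧ ∃ m, l * K ≤ m ∧ m + (K - 1) + 1 ≤ l * K + 2 * K ∧
    ∀ i, m ≤ i → i < m + (K - 1) → y i = true

lemma swProp_imp {K L : ℕ} {pe : ℕ → Prop} {y z : ℕ → Bool}
    (h : ∀ i, i + 1 < (L + 2) * K → y i = z i) :
    SwProp K L pe y → SwProp K L pe z := by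
  rintro ⟨l, hl, hpe, m, h1, h2, h3⟩
  refine ⟨l, hl, hpe, m, h1, h2, fun i hi1 hi2 => ?_⟩
  have hlK : l * K ≤ L * K := Nat.mul_le_mul_right K hl
  have hLK : (L + 2) * K = L * K + 2 * K := by ring
  rw [← h i (by omega)]
  exact h3 i hi1 hi2

lemma swProp_mono {K L : ℕ} {pe : ℕ → Prop} {y z : ℕ → Bool}
    (h : ∀ i, y i = true → z i = true) :
    SwProp K L pe y → SwProp K L pe z := by
  rintro ⟨l, hl, hpe, m, h1, h2, h3⟩
  exact ⟨l, hl, hpe, m, h1, h2, fun i hi1 hi2 => h i (h3 i hi1 hi2)⟩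

def swF {m : ℕ} (v : Fin (m + 1) → Bool) (i : Fin m) : Bool :=
  v i.castSucc != v i.succ

def extB {m : ℕ} (y : Fin m → Bool) (i : ℕ) : Bool :=
  if h : i < m then y ⟨i, h⟩ else false

def enc {m : ℕ} (v : Fin (m + 1) → Bool) : Bool × (Fin m → Bool) :=
  (v 0, swF v)

lemma enc_injective {m : ℕ} : Function.Injective (enc (m := m)) := by
  intro v w h
  have h0 : v 0 = w 0 := congrArg Prod.fst h
  have hs : swF v = swF w := congrArg Prod.snd h
  funext i
  induction i using Fin.induction with
  | zero => exact h0
  | succ i ih =>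
    have := congrFun hs i
    unfold swF at this
    rw [ih] at this
    cases hvs : v i.succ <;> cases hws : w i.succ <;> simp_all

lemma enc_bijective {m : ℕ} : Function.Bijective (enc (m := m)) := by
  rw [Fintype.bijective_iff_injective_and_card]
  refine ⟨enc_injective, ?_⟩
  simp [Fintype.card_fun]
  ring

lemma harris {α : Type*} [DistribLattice α] [Fintype α] [DecidableEq α]
    (A B : Finset α) (hA : ∀ ⦃a b : α⦄, a ≤ b → a ∈ A → b ∈ A)
    (hB : ∀ ⦃a b : α⦄, a ≤ b → a ∈ B → b ∈ B) :
    A.card * B.card ≤ Fintype.card α * (A ∩ B).card := by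
  calc A.card * B.card ≤ (A ⊼ B).card * (A ⊻ B).card := Finset.le_card_infs_mul_card_sups A B
    _ ≤ Fintype.card α * (A ∩ B).card := by
        refine Nat.mul_le_mul (Finset.card_le_univ _) (Finset.card_le_card ?_)
        intro c hc
        obtain ⟨a, ha, b, hb, rfl⟩ := Finset.mem_sups.1 hc
        exact Finset.mem_inter.2 ⟨hA le_sup_left ha, hB le_sup_right hb⟩

lemma bool_le_true {a b : Bool} (h : a ≤ b) (ha : a = true) : b = true := by
  subst ha
  exact (le_antisymm h (Bool.le_true b)).symm

lemma atom_meas {Ω : Type*} [MeasurableSpace Ω] (P : Measure Ω)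
    (X : ℕ → Ω → Bool) (hindep : iIndepFun X P)
    (hfair : ∀ i b, P {ω | X i ω = b} = 1 / 2) (n : ℕ) (v : Fin n → Bool) :
    P {ω | ∀ i : Fin n, X i ω = v i} = (1 / 2 : ENNReal) ^ n := by
  classical
  set w : ℕ → Bool := fun i => if h : i < n then v ⟨i, h⟩ else false with hw
  have hset : {ω | ∀ i : Fin n, X i ω = v i} = ⋂ i ∈ Finset.range n, X i ⁻¹' {w i} := by
    ext ω
    simp only [Set.mem_setOf_eq, Set.mem_iInter, Finset.mem_range, Set.mem_preimage,
      Set.mem_singleton_iff]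
    constructor
    · intro h i hi
      simpa [hw, hi] using h ⟨i, hi⟩
    · intro h i
      have := h i i.2
      simpa [hw, i.2] using this
  rw [hset, hindep.meas_biInter (fun i _ => ⟨{w i}, trivial, rfl⟩)]
  have : ∀ i ∈ Finset.range n, P (X i ⁻¹' {w i}) = 1 / 2 := by
    intro i _
    have : X i ⁻¹' {w i} = {ω | X i ω = w i} := rfl
    rw [this, hfair]
  rw [Finset.prod_congr rfl this, Finset.prod_const, Finset.card_range]

lemma finset_meas {Ω : Type*} [MeasurableSpace Ω] (P : Measure Ω)
    (X : ℕ → Ω → Bool) (hmeas : ∀ i, Measurable (X i))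
    (hindep : iIndepFun X P)
    (hfair : ∀ i b, P {ω | X i ω = b} = 1 / 2) (n : ℕ) (S : Finset (Fin n → Bool)) :
    P {ω | (fun i : Fin n => X i ω) ∈ S} = S.card * (1 / 2 : ENNReal) ^ n := by
  classical
  have hset : {ω | (fun i : Fin n => X i ω) ∈ S}
      = ⋃ v ∈ S, {ω | ∀ i : Fin n, X i ω = v i} := by
    ext ω
    simp only [Set.mem_setOf_eq, Set.mem_iUnion]
    constructor
    · intro h
      exact ⟨_, h, fun i => rfl⟩
    · rintro ⟨v, hv, he⟩
      have : (fun i : Fin n => X i ω) = v := funext he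
      rwa [this]
  rw [hset, measure_biUnion_finset]
  · rw [Finset.sum_congr rfl (fun v _ => atom_meas P X hindep hfair n v),
      Finset.sum_const, nsmul_eq_mul]
  · intro v hv u hu hvu
    rw [Function.onFun, Set.disjoint_left]
    intro ω h1 h2
    exact hvu (funext fun i => (h1 i).symm.trans (h2 i))
  · intro v _
    have : {ω | ∀ i : Fin n, X i ω = v i} = ⋂ i : Fin n, {ω | X i ω = v i} := by
      ext ω; simp
    rw [this]
    exact MeasurableSet.iInter fun i => (hmeas i) (measurableSet_singleton (v i))

/-- Positive association of the events `C_l`. For `K ≥ 2`, `N ≥ 2K` and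
`L = [(N − 2K)/K]`, let `C_l` be the event that some block of `K` consecutive tosses
within `X_{lK+1}, …, X_{(l+2)K}` (1-based; 0-based window start `lK`, length `2K`) is
alternating. With `D₀` the union of the `C_l` over even `l ≤ L` and `D₁` the union over
odd `l ≤ L`, we have `P(D₀ ∩ D₁) ≥ P(D₀) P(D₁)`. -/
theorem prob_inter_unions_ge_mul {Ω : Type*} [MeasurableSpace Ω] (P : Measure Ω) [IsProbabilityMeasure P]
    (X : ℕ → Ω → Bool) (hmeas : ∀ i, Measurable (X i))
    (hindep : iIndepFun X P)
    (hfair : ∀ i b, P {ω | X i ω = b} = 1 / 2)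
    (K N : ℕ) (hK : 2 ≤ K) (hN : 2 * K ≤ N) :
    P {ω | ∃ l, l ≤ (N - 2 * K) / K ∧ Even l ∧ K - 1 ≤ longestSwitchIn X (l * K) (2 * K) ω}
        * P {ω | ∃ l, l ≤ (N - 2 * K) / K ∧ Odd l ∧
            K - 1 ≤ longestSwitchIn X (l * K) (2 * K) ω} ≤
      P ({ω | ∃ l, l ≤ (N - 2 * K) / K ∧ Even l ∧
            K - 1 ≤ longestSwitchIn X (l * K) (2 * K) ω} ∩
          {ω | ∃ l, l ≤ (N - 2 * K) / K ∧ Odd l ∧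
            K - 1 ≤ longestSwitchIn X (l * K) (2 * K) ω}) := by
  classical
  set L : ℕ := (N - 2 * K) / K with hLdef
  -- the number of relevant switch coordinates
  have h2 : 1 ≤ (L + 2) * K := le_trans (show (1:ℕ) ≤ 2 * K by omega) (Nat.mul_le_mul_right K (Nat.le_add_left 2 L))
  obtain ⟨m, hn⟩ := Nat.exists_eq_succ_of_ne_zero (Nat.one_le_iff_ne_zero.1 h2)
  -- the events as conditions on switches
  have hstep1 : ∀ (pe : ℕ → Prop) ω,
      (∃ l, l ≤ L ∧ pe l ∧ K - 1 ≤ longestSwitchIn X (l * K) (2 * K) ω) ↔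
      SwProp K L pe (fun i => X i ω != X (i + 1) ω) := by
    intro pe ω
    unfold SwProp
    refine exists_congr fun l => and_congr_right fun hl => and_congr_right fun _ => ?_
    rw [longest_ge_iff X (l * K) (2 * K) (K - 1) (by omega) ω]
    refine exists_congr fun m' => and_congr_right fun _ => and_congr_right fun _ => ?_
    unfold AltBlock
    simp [bne_iff_ne]
  have hext : ∀ (ω : Ω) i, i < m →
      extB (swF (fun j : Fin (m + 1) => X j ω)) i = (X i ω != X (i + 1) ω) := by
    intro ω i hi
    simp only [extB, dif_pos hi]
    rfl
  have hstep2 : ∀ (pe : ℕ → Prop) ω,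
      SwProp K L pe (fun i => X i ω != X (i + 1) ω) ↔
      SwProp K L pe (extB (swF (fun j : Fin (m + 1) => X j ω))) := by
    intro pe ω
    constructor
    · exact swProp_imp fun i hi => (hext ω i (by omega)).symm
    · exact swProp_imp fun i hi => hext ω i (by omega)
  -- the finsets
  set S₀ : Finset (Fin (m + 1) → Bool) :=
    Finset.univ.filter (fun v => SwProp K L Even (extB (swF v))) with hS0
  set S₁ : Finset (Fin (m + 1) → Bool) :=
    Finset.univ.filter (fun v => SwProp K L Odd (extB (swF v))) with hS1
  have hE0 : {ω | ∃ l, l ≤ L ∧ Even l ∧ K - 1 ≤ longestSwitchIn X (l * K) (2 * K) ω}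
      = {ω | (fun i : Fin (m + 1) => X i ω) ∈ S₀} := by
    ext ω
    simp only [Set.mem_setOf_eq, hS0, Finset.mem_filter, Finset.mem_univ, true_and]
    rw [hstep1 Even ω, hstep2 Even ω]
  have hE1 : {ω | ∃ l, l ≤ L ∧ Odd l ∧ K - 1 ≤ longestSwitchIn X (l * K) (2 * K) ω}
      = {ω | (fun i : Fin (m + 1) => X i ω) ∈ S₁} := by
    ext ω
    simp only [Set.mem_setOf_eq, hS1, Finset.mem_filter, Finset.mem_univ, true_and]
    rw [hstep1 Odd ω, hstep2 Odd ω]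
  -- counting: Harris inequality via the switch encoding
  set A₀ : Finset (Bool × (Fin m → Bool)) :=
    Finset.univ.filter (fun p => SwProp K L Even (extB p.2)) with hA0
  set A₁ : Finset (Bool × (Fin m → Bool)) :=
    Finset.univ.filter (fun p => SwProp K L Odd (extB p.2)) with hA1
  have himg0 : S₀.image enc = A₀ := by
    ext p
    simp only [Finset.mem_image, hS0, hA0, Finset.mem_filter, Finset.mem_univ, true_and]
    constructor
    · rintro ⟨v, hv, rfl⟩; exact hv
    · intro hp
      obtain ⟨v, rfl⟩ := enc_bijective.2 p
      exact ⟨v, hp, rfl⟩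
  have himg1 : S₁.image enc = A₁ := by
    ext p
    simp only [Finset.mem_image, hS1, hA1, Finset.mem_filter, Finset.mem_univ, true_and]
    constructor
    · rintro ⟨v, hv, rfl⟩; exact hv
    · intro hp
      obtain ⟨v, rfl⟩ := enc_bijective.2 p
      exact ⟨v, hp, rfl⟩
  have hc0 : S₀.card = A₀.card := by
    rw [← himg0, Finset.card_image_of_injective _ enc_injective]
  have hc1 : S₁.card = A₁.card := by
    rw [← himg1, Finset.card_image_of_injective _ enc_injective]
  have hcI : (S₀ ∩ S₁).card = (A₀ ∩ A₁).card := by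
    rw [← himg0, ← himg1, ← Finset.image_inter _ _ enc_injective,
      Finset.card_image_of_injective _ enc_injective]
  have hup : ∀ (pe : ℕ → Prop) ⦃p q : Bool × (Fin m → Bool)⦄, p ≤ q →
      p ∈ Finset.univ.filter (fun p => SwProp K L pe (extB p.2)) →
      q ∈ Finset.univ.filter (fun p => SwProp K L pe (extB p.2)) := by
    intro pe p q hpq hp
    rw [Finset.mem_filter] at hp ⊢
    refine ⟨Finset.mem_univ _, swProp_mono (fun i hi => ?_) hp.2⟩
    by_cases h : i < m
    · simp only [extB, dif_pos h] at hi ⊢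
      exact bool_le_true (hpq.2 ⟨i, h⟩) hi
    · simp only [extB, dif_neg h] at hi
      exact absurd hi Bool.false_ne_true
  have hcardα : Fintype.card (Bool × (Fin m → Bool)) = 2 ^ (m + 1) := by
    simp [Fintype.card_fun]
    ring
  have hcount : S₀.card * S₁.card ≤ 2 ^ (m + 1) * (S₀ ∩ S₁).card := by
    rw [hc0, hc1, hcI, ← hcardα]
    exact harris A₀ A₁ (hup Even) (hup Odd)
  -- probabilities
  have hP0 : P {ω | ∃ l, l ≤ L ∧ Even l ∧ K - 1 ≤ longestSwitchIn X (l * K) (2 * K) ω}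
      = S₀.card * (1 / 2 : ENNReal) ^ (m + 1) := by
    rw [hE0]; exact finset_meas P X hmeas hindep hfair (m + 1) S₀
  have hP1 : P {ω | ∃ l, l ≤ L ∧ Odd l ∧ K - 1 ≤ longestSwitchIn X (l * K) (2 * K) ω}
      = S₁.card * (1 / 2 : ENNReal) ^ (m + 1) := by
    rw [hE1]; exact finset_meas P X hmeas hindep hfair (m + 1) S₁
  have hPI : P ({ω | ∃ l, l ≤ L ∧ Even l ∧ K - 1 ≤ longestSwitchIn X (l * K) (2 * K) ω}
      ∩ {ω | ∃ l, l ≤ L ∧ Odd l ∧ K - 1 ≤ longestSwitchIn X (l * K) (2 * K) ω})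
      = (S₀ ∩ S₁).card * (1 / 2 : ENNReal) ^ (m + 1) := by
    rw [hE0, hE1]
    have : {ω | (fun i : Fin (m + 1) => X i ω) ∈ S₀} ∩ {ω | (fun i : Fin (m + 1) => X i ω) ∈ S₁}
        = {ω | (fun i : Fin (m + 1) => X i ω) ∈ S₀ ∩ S₁} := by
      ext ω; simp [Finset.mem_inter]
    rw [this]
    exact finset_meas P X hmeas hindep hfair (m + 1) (S₀ ∩ S₁)
  rw [hP0, hP1, hPI]
  have hq : (2 : ENNReal) ^ (m + 1) * (1 / 2 : ENNReal) ^ (m + 1) = 1 := by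
    rw [← mul_pow, one_div, ENNReal.mul_inv_cancel (by norm_num) (by norm_num), one_pow]
  calc (S₀.card : ENNReal) * (1 / 2 : ENNReal) ^ (m + 1)
        * ((S₁.card : ENNReal) * (1 / 2 : ENNReal) ^ (m + 1))
      = ((S₀.card : ENNReal) * S₁.card) * ((1 / 2 : ENNReal) ^ (m + 1) * (1 / 2) ^ (m + 1)) := by
        ring
    _ ≤ ((2 : ENNReal) ^ (m + 1) * (S₀ ∩ S₁).card)
        * ((1 / 2 : ENNReal) ^ (m + 1) * (1 / 2) ^ (m + 1)) := by
        refine mul_le_mul_left ?_ _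
        have := hcount
        exact_mod_cast Nat.cast_le.2 this
    _ = ((2 : ENNReal) ^ (m + 1) * (1 / 2 : ENNReal) ^ (m + 1))
        * (((S₀ ∩ S₁).card : ENNReal) * (1 / 2) ^ (m + 1)) := by
        rw [mul_mul_mul_comm]
    _ = ((S₀ ∩ S₁).card : ENNReal) * (1 / 2 : ENNReal) ^ (m + 1) := by
        rw [hq, one_mul]
end
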